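/- arXiv:1604.06931 — 4 statements merged into one kernel-verified Lean document; each statement's English description precedes it below -/
import Mathlib

section
/- Let Γ be a finite simple graph on vertex set V with |V| = n, and let P be a polynomial in one variable t with coefficients in ℤ[q] such that for every natural number d, P evaluated at d equals χ_q(Γ,d). Then, as an identity of polynomials in ℤ[q], (−1)^n · (P evaluated at t = −1, with q replaced by −q) = Σ over all flats F of Γ of a(Γ/F)·q^{rk(F)}. -/
open Polynomial

/-- The graphical zonotope of `G`, as the Minkowski sum over the edges `{i,j}` of `G`
of the segments `[-(e_i - e_j), e_i - e_j]`, described via antisymmetric coefficient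
functions supported on edges. -/
def graphicalZonotope {V : Type} [Fintype V] [DecidableEq V] (G : SimpleGraph V) :
    Set (V → ℝ) :=
  { x | ∃ c : V → V → ℝ, (∀ u v, c u v = - c v u) ∧ (∀ u v, ¬ G.Adj u v → c u v = 0) ∧
      (∀ u v, |c u v| ≤ 1) ∧ x = fun w => ∑ u, c w u }

/-- `faceCount G k` is the number of nonempty exposed faces of the graphical zonotope of `G`
whose affine span has dimension `k`. -/
noncomputable def faceCount {V : Type} [Fintype V] [DecidableEq V] (G : SimpleGraph V)
    (k : ℕ) : ℕ :=
  Nat.card { F : Set (V → ℝ) // F.Nonempty ∧ IsExposed ℝ (graphicalZonotope G) F ∧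
      Module.finrank ℝ (affineSpan ℝ F).direction = k }

/-- The number of acyclic orientations of `G`. -/
noncomputable def acyclicOrientationCount {V : Type} (G : SimpleGraph V) : ℕ :=
  Nat.card { r : V → V → Prop // (∀ u v, r u v → G.Adj u v) ∧
      (∀ u v, G.Adj u v → Xor' (r u v) (r v u)) ∧ (∀ v, ¬ Relation.TransGen r v v) }

/-- rank of the induced subgraph on `s` : `|s| - #components`. -/
noncomputable def inducedRank {V : Type} (G : SimpleGraph V) (s : Set V) : ℕ :=
  Nat.card s - Nat.card (G.induce s).ConnectedComponent

/-- The `q`-analog of the chromatic polynomial evaluated at `d` colors, an element of `ℤ[q]`. -/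
noncomputable def chromQ {V : Type} [Fintype V] [DecidableEq V] (G : SimpleGraph V) (d : ℕ) : Polynomial ℤ :=
  ∑ f : V → Fin d, (X : Polynomial ℤ) ^ (∑ i : Fin d, inducedRank G (f ⁻¹' {i}))

/-- `H` is (the spanning subgraph determined by) a flat of `G`. -/
def IsFlatOf {V : Type} (G H : SimpleGraph V) : Prop :=
  H ≤ G ∧ ∀ u v, G.Adj u v → H.Reachable u v → H.Adj u v

/-- The rank of a spanning subgraph `H`: `|V| - c(H)`. -/
noncomputable def flatRank {V : Type} [Fintype V] (H : SimpleGraph V) : ℕ :=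
  Fintype.card V - Nat.card H.ConnectedComponent

/-- The contraction `G/H`: vertices are the connected components of `H`, two distinct
components being adjacent iff some edge of `G` joins them. -/
def contractFlat {V : Type} (G H : SimpleGraph V) : SimpleGraph H.ConnectedComponent where
  Adj C D := C ≠ D ∧ ∃ u v, G.Adj u v ∧ H.connectedComponentMk u = C ∧
      H.connectedComponentMk v = D
  symm := by
    constructor
    rintro C D ⟨hne, u, v, hadj, hu, hv⟩
    exact ⟨hne.symm, v, u, hadj.symm, hv, hu⟩
  loopless := by constructor; rintro C ⟨hne, -⟩; exact hne rfl


set_option linter.unreachableTactic false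
set_option linter.unusedTactic false
set_option linter.unusedSectionVars false
set_option linter.unusedVariables false


section Utils
variable {V : Type}

private lemma reachable_mono_aux {H K : SimpleGraph V}
    (h : ∀ a b, H.Adj a b → K.Reachable a b) {u v : V} (huv : H.Reachable u v) :
    K.Reachable u v := by
  obtain ⟨w⟩ := huv
  induction w with
  | nil => exact SimpleGraph.Reachable.refl _
  | cons h' _ ih => exact (h _ _ h').trans ih

private lemma ncc_congr {H K : SimpleGraph V}
    (h : ∀ u v, H.Reachable u v ↔ K.Reachable u v) :
    Nat.card H.ConnectedComponent = Nat.card K.ConnectedComponent :=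
  Nat.card_congr (Quot.congr (Equiv.refl V) h)

private def constOnEquiv (H : SimpleGraph V) (β : Type) :
    {f : V → β // ∀ u v, H.Reachable u v → f u = f v} ≃ (H.ConnectedComponent → β) where
  toFun f := Quot.lift f.1 (fun a b hab => f.2 a b hab)
  invFun g := ⟨fun v => g (H.connectedComponentMk v),
    fun u v huv => congrArg g (SimpleGraph.ConnectedComponent.sound huv)⟩
  left_inv f := rfl
  right_inv g := by
    funext c
    induction c using SimpleGraph.ConnectedComponent.ind
    rfl

private lemma card_const_on [Finite V] (H : SimpleGraph V) (d : ℕ) :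
    Nat.card {f : V → Fin d // ∀ u v, H.Reachable u v → f u = f v}
      = d ^ (Nat.card H.ConnectedComponent) := by
  rw [Nat.card_congr (constOnEquiv H (Fin d)), Nat.card_fun, Nat.card_eq_fintype_card,
    Fintype.card_fin]

private noncomputable def edgeFS [Fintype V] (G : SimpleGraph V) : Finset (Sym2 V) :=
  Set.Finite.toFinset G.edgeSet.toFinite

private lemma mem_edgeFS [Fintype V] {G : SimpleGraph V} {e : Sym2 V} :
    e ∈ edgeFS G ↔ e ∈ G.edgeSet := Set.Finite.mem_toFinset _

private noncomputable def nccF (s : Finset (Sym2 V)) : ℕ :=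
  Nat.card (SimpleGraph.fromEdgeSet (↑s : Set (Sym2 V))).ConnectedComponent

private noncomputable def whitney [Fintype V] (G : SimpleGraph V) : Polynomial ℤ :=
  ∑ s ∈ (edgeFS G).powerset, (-1 : Polynomial ℤ) ^ s.card * X ^ nccF s

private noncomputable def properCount (G : SimpleGraph V) (d : ℕ) : ℕ :=
  Nat.card {f : V → Fin d // ∀ u v, G.Adj u v → f u ≠ f v}

private def monoP {β : Type} (f : V → β) (e : Sym2 V) : Prop :=
  ∃ u v, e = s(u, v) ∧ f u = f v

private lemma forall_monoP_iff {β : Type} (f : V → β) (t : Finset (Sym2 V)) :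
    (∀ e ∈ t, monoP f e) ↔
      (∀ u v, (SimpleGraph.fromEdgeSet (↑t : Set (Sym2 V))).Reachable u v → f u = f v) := by
  constructor
  · intro h u v huv
    obtain ⟨w⟩ := huv
    induction w with
    | nil => rfl
    | @cons a b c hadj p ih =>
      rw [SimpleGraph.fromEdgeSet_adj] at hadj
      obtain ⟨u', v', heq, hf⟩ := h _ hadj.1
      rw [Sym2.eq_iff] at heq
      have hab : f a = f b := by
        rcases heq with ⟨h1, h2⟩ | ⟨h1, h2⟩
        · rw [h1, h2]; exact hf
        · rw [h1, h2]; exact hf.symm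
      exact hab.trans ih
  · intro h e he
    induction e using Sym2.inductionOn with
    | hf x y =>
      by_cases hxy : x = y
      · exact ⟨x, y, rfl, by rw [hxy]⟩
      · refine ⟨x, y, rfl, h x y ?_⟩
        exact SimpleGraph.Adj.reachable (by rw [SimpleGraph.fromEdgeSet_adj]; exact ⟨he, hxy⟩)

private lemma card_allmono [Fintype V] (d : ℕ) (t : Finset (Sym2 V)) :
    Nat.card {f : V → Fin d // ∀ e ∈ t, monoP f e} = d ^ nccF t := by
  rw [Nat.card_congr (Equiv.subtypeEquivRight (fun f => forall_monoP_iff f t))]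
  exact card_const_on _ d

private lemma nat_card_subtype_eq_filter {α : Type} [Fintype α] (p : α → Prop) [DecidablePred p] :
    (Nat.card {x // p x}) = (Finset.univ.filter p).card := by
  rw [Nat.card_eq_fintype_card, Fintype.card_subtype]

private lemma whitney_eval [Fintype V] (G : SimpleGraph V) (d : ℕ) :
    (whitney G).eval ((d : ℕ) : ℤ) = (properCount G d : ℤ) := by
  classical
  have heval : (whitney G).eval ((d : ℕ) : ℤ)
      = ∑ s ∈ (edgeFS G).powerset, (-1 : ℤ) ^ s.card * ((d : ℕ) : ℤ) ^ nccF s := by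
    simp [whitney, Polynomial.eval_finset_sum]
  -- properCount as a big sum
  have hcount : (properCount G d : ℤ)
      = ∑ f : V → Fin d, ∏ e ∈ edgeFS G, ((1 : ℤ) - if monoP f e then 1 else 0) := by
    have h1 : (properCount G d : ℤ)
        = ((Finset.univ.filter (fun f : V → Fin d => ∀ u v, G.Adj u v → f u ≠ f v)).card : ℤ) := by
      rw [properCount, nat_card_subtype_eq_filter]
    rw [h1, Finset.card_filter]
    push_cast
    refine Finset.sum_congr rfl (fun f _ => ?_)
    by_cases hf : ∀ u v, G.Adj u v → f u ≠ f v
    · rw [if_pos hf]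
      refine (Finset.prod_eq_one (fun e he => ?_)).symm
      rw [mem_edgeFS] at he
      have : ¬ monoP f e := by
        rintro ⟨u', v', rfl, hfe⟩
        rw [SimpleGraph.mem_edgeSet] at he
        exact hf _ _ he hfe
      rw [if_neg this, sub_zero]
    · rw [if_neg hf]
      push_neg at hf
      obtain ⟨u, v, hadj, hfe⟩ := hf
      refine (Finset.prod_eq_zero (i := s(u, v)) ?_ ?_).symm
      · rw [mem_edgeFS]; exact G.mem_edgeSet.2 hadj
      · rw [if_pos ⟨u, v, rfl, hfe⟩]; ring
  rw [heval, hcount]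
  -- expand the product
  have hexp : ∀ f : V → Fin d,
      ∏ e ∈ edgeFS G, ((1 : ℤ) - if monoP f e then 1 else 0)
        = ∑ t ∈ (edgeFS G).powerset, (-1 : ℤ) ^ t.card * ∏ e ∈ t, (if monoP f e then (1:ℤ) else 0) := by
    intro f
    have := Finset.prod_add (fun e => -(if monoP f e then (1:ℤ) else 0)) (fun _ => (1:ℤ)) (edgeFS G)
    simp only [Finset.prod_const_one, mul_one] at this
    calc ∏ e ∈ edgeFS G, ((1 : ℤ) - if monoP f e then 1 else 0)
        = ∏ e ∈ edgeFS G, ((-(if monoP f e then (1:ℤ) else 0)) + 1) := by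
          refine Finset.prod_congr rfl (fun e _ => by ring)
      _ = ∑ t ∈ (edgeFS G).powerset, ∏ e ∈ t, (-(if monoP f e then (1:ℤ) else 0)) := this
      _ = _ := by
          refine Finset.sum_congr rfl (fun t _ => ?_)
          rw [show (fun e => -(if monoP f e then (1:ℤ) else 0)) = (fun e => (-1) * (if monoP f e then (1:ℤ) else 0)) from funext (fun e => by ring)]
          rw [Finset.prod_mul_distrib, Finset.prod_const]
  rw [Finset.sum_congr rfl (fun f _ => hexp f), Finset.sum_comm]
  refine Finset.sum_congr rfl (fun t _ => ?_)
  rw [← Finset.mul_sum]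
  congr 1
  have : ∀ f : V → Fin d, (∏ e ∈ t, (if monoP f e then (1:ℤ) else 0))
      = (if (∀ e ∈ t, monoP f e) then (1:ℤ) else 0) := by
    intro f
    by_cases hf : ∀ e ∈ t, monoP f e
    · rw [if_pos hf]; exact Finset.prod_eq_one (fun e he => if_pos (hf e he))
    · rw [if_neg hf]
      push_neg at hf
      obtain ⟨e, he, hne⟩ := hf
      exact Finset.prod_eq_zero he (if_neg hne)
  rw [Finset.sum_congr rfl (fun f _ => this f)]
  rw [Finset.sum_boole]
  have h2 : (Nat.card {f : V → Fin d // ∀ e ∈ t, monoP f e})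
      = (Finset.univ.filter (fun f : V → Fin d => ∀ e ∈ t, monoP f e)).card :=
    nat_card_subtype_eq_filter _
  rw [← h2, card_allmono d t]
  push_cast
  ring

end Utils
section DelContr
variable {V : Type}

private lemma poly_ext {p q : Polynomial (Polynomial ℤ)}
    (h : ∀ d : ℕ, p.eval ((d : ℕ) : Polynomial ℤ) = q.eval ((d : ℕ) : Polynomial ℤ)) : p = q := by
  have hroot : p - q = 0 := by
    refine Polynomial.eq_zero_of_infinite_isRoot _ ?_
    refine Set.infinite_of_injective_forall_mem
      (f := fun d : ℕ => ((d : ℕ) : Polynomial ℤ)) Nat.cast_injective ?_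
    intro d
    simp only [Set.mem_setOf_eq, Polynomial.IsRoot, Polynomial.eval_sub, h d, sub_self]
  linear_combination hroot

private lemma poly_ext_int {p q : Polynomial ℤ}
    (h : ∀ d : ℕ, p.eval ((d : ℕ) : ℤ) = q.eval ((d : ℕ) : ℤ)) : p = q := by
  have hroot : p - q = 0 := by
    refine Polynomial.eq_zero_of_infinite_isRoot _ ?_
    refine Set.infinite_of_injective_forall_mem
      (f := fun d : ℕ => ((d : ℕ) : ℤ)) Nat.cast_injective ?_
    intro d
    simp only [Set.mem_setOf_eq, Polynomial.IsRoot, Polynomial.eval_sub, h d, sub_self]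
  linear_combination hroot

private def contractE (H : SimpleGraph V) (u v : V) (h : ¬ H.Adj u v) :
    SimpleGraph {w : V // w ≠ v} where
  Adj a b := H.Adj a.1 b.1 ∨ (a.1 = u ∧ H.Adj v b.1) ∨ (b.1 = u ∧ H.Adj a.1 v)
  symm := by
    constructor
    rintro a b (hab | ⟨ha, hb⟩ | ⟨hb, ha⟩)
    · exact Or.inl hab.symm
    · exact Or.inr (Or.inr ⟨ha, hb.symm⟩)
    · exact Or.inr (Or.inl ⟨hb, ha.symm⟩)
  loopless := by
    constructor
    rintro a (haa | ⟨ha, h2⟩ | ⟨ha, h2⟩)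
    · exact H.irrefl haa
    · rw [ha] at h2; exact h (h2.symm)
    · rw [ha] at h2; exact h h2

private lemma gd_not_adj {G : SimpleGraph V} {u v : V} :
    ¬ (G.deleteEdges {s(u,v)}).Adj u v := by
  rw [SimpleGraph.deleteEdges_adj]
  rintro ⟨-, h⟩
  exact h rfl

variable [Fintype V] [DecidableEq V] {G : SimpleGraph V} {u v : V}

/-- The coloring bijection for deletion/contraction. -/
private lemma properCount_rec (hadj : G.Adj u v) (d : ℕ) :
    properCount (G.deleteEdges {s(u,v)}) d
      = properCount G d + properCount (contractE (G.deleteEdges {s(u,v)}) u v (gd_not_adj)) d := by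
  classical
  have hne : u ≠ v := G.ne_of_adj hadj
  set Gd := G.deleteEdges {s(u,v)} with hGd
  set Gc := contractE Gd u v (gd_not_adj) with hGc
  have hGdAdj : ∀ a b, Gd.Adj a b ↔ (G.Adj a b ∧ s(a,b) ≠ s(u,v)) := by
    intro a b; rw [hGd, SimpleGraph.deleteEdges_adj]; simp
  -- the map
  let ext : ({w : V // w ≠ v} → Fin d) → (V → Fin d) := fun g w =>
    if h : w = v then g ⟨u, hne⟩ else g ⟨w, h⟩
  let Ψ : {f : V → Fin d // ∀ a b, G.Adj a b → f a ≠ f b}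
      ⊕ {g : {w : V // w ≠ v} → Fin d // ∀ a b, Gc.Adj a b → g a ≠ g b}
      → {f : V → Fin d // ∀ a b, Gd.Adj a b → f a ≠ f b} := fun x =>
    match x with
    | Sum.inl ⟨f, hf⟩ => ⟨f, fun a b hab => hf a b ((hGdAdj a b).1 hab).1⟩
    | Sum.inr ⟨g, hg⟩ => ⟨ext g, by
        intro a b hab
        show ext g a ≠ ext g b
        by_cases hav : a = v
        · have hbv : b ≠ v := by rintro rfl; rw [hav] at hab; exact Gd.irrefl hab
          have hbu : b ≠ u := by rintro rfl; rw [hav] at hab; exact gd_not_adj hab.symm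
          have hadj2 : Gd.Adj v b := hav ▸ hab
          have hc : Gc.Adj ⟨u, hne⟩ ⟨b, hbv⟩ := Or.inr (Or.inl ⟨rfl, hadj2⟩)
          have hgg := hg _ _ hc
          simp only [ext]
          rw [dif_pos hav, dif_neg hbv]
          exact hgg
        · by_cases hbv : b = v
          · have hadj2 : Gd.Adj a v := hbv ▸ hab
            have hau : a ≠ u := by rintro rfl; exact gd_not_adj hadj2
            have hc : Gc.Adj ⟨a, hav⟩ ⟨u, hne⟩ := Or.inr (Or.inr ⟨rfl, hadj2⟩)
            have hgg := hg _ _ hc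
            simp only [ext]
            rw [dif_neg hav, dif_pos hbv]
            exact hgg
          · have hc : Gc.Adj ⟨a, hav⟩ ⟨b, hbv⟩ := Or.inl hab
            have hgg := hg _ _ hc
            simp only [ext]
            rw [dif_neg hav, dif_neg hbv]
            exact hgg⟩
  have hbij : Function.Bijective Ψ := by
    constructor
    · rintro (⟨f, hf⟩ | ⟨g, hg⟩) (⟨f', hf'⟩ | ⟨g', hg'⟩) h
      · simpa [Ψ, Subtype.ext_iff] using Subtype.ext_iff.1 h
      · exfalso
        have hval : f = ext g' := by simpa [Ψ, Subtype.ext_iff] using h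
        have h1 : f u = g' ⟨u, hne⟩ := by
          rw [hval]; simp [ext, hne]
        have h2 : f v = g' ⟨u, hne⟩ := by
          rw [hval]; simp [ext]
        exact hf u v hadj (h1.trans h2.symm)
      · exfalso
        have hval : ext g = f' := by simpa [Ψ, Subtype.ext_iff] using h
        have h1 : f' u = g ⟨u, hne⟩ := by
          rw [← hval]; simp [ext, hne]
        have h2 : f' v = g ⟨u, hne⟩ := by
          rw [← hval]; simp [ext]
        exact hf' u v hadj (h1.trans h2.symm)
      · have hval : ext g = ext g' := by simpa [Ψ, Subtype.ext_iff] using h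
        have : g = g' := by
          funext x
          have := congrFun hval x.1
          simpa [ext, x.2] using this
        simp [Ψ, this]
    · rintro ⟨f, hf⟩
      by_cases hfu : f u = f v
      · -- comes from a contraction coloring
        refine ⟨Sum.inr ⟨fun x => f x.1, ?_⟩, ?_⟩
        · rintro a b (hab | ⟨ha, hab⟩ | ⟨hb, hab⟩)
          · exact hf _ _ hab
          · have h3 := hf _ _ hab
            show f a.1 ≠ f b.1
            rw [ha, hfu]
            exact h3
          · have h3 := hf _ _ hab
            show f a.1 ≠ f b.1
            rw [hb, hfu]
            exact h3
        · apply Subtype.ext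
          funext w
          by_cases hw : w = v
          · subst hw; simp [Ψ, ext, hfu]
          · simp [Ψ, ext, hw]
      · refine ⟨Sum.inl ⟨f, ?_⟩, ?_⟩
        · intro a b hab
          by_cases he : s(a,b) = s(u,v)
          · rw [Sym2.eq_iff] at he
            rcases he with ⟨rfl, rfl⟩ | ⟨rfl, rfl⟩
            · exact hfu
            · exact fun hc => hfu hc.symm
          · exact hf a b ((hGdAdj a b).2 ⟨hab, he⟩)
        · rfl
  calc properCount Gd d = Nat.card ({f : V → Fin d // ∀ a b, G.Adj a b → f a ≠ f b}
      ⊕ {g : {w : V // w ≠ v} → Fin d // ∀ a b, Gc.Adj a b → g a ≠ g b}) :=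
        (Nat.card_eq_of_bijective Ψ hbij).symm
    _ = _ := by
        rw [Nat.card_sum]; rfl

private lemma whitney_rec (hadj : G.Adj u v) :
    whitney (G.deleteEdges {s(u,v)})
      = whitney G + whitney (contractE (G.deleteEdges {s(u,v)}) u v (gd_not_adj)) := by
  refine poly_ext_int (fun d => ?_)
  rw [whitney_eval, Polynomial.eval_add, whitney_eval, whitney_eval, properCount_rec hadj]
  push_cast
  ring

end DelContr
section EdgeCount
variable {V : Type} [Fintype V] [DecidableEq V] {G : SimpleGraph V} {u v : V}

private lemma edgeFS_delete :
    edgeFS (G.deleteEdges {s(u,v)}) = (edgeFS G).erase s(u,v) := by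
  ext e
  simp only [mem_edgeFS, SimpleGraph.edgeSet_deleteEdges, Set.mem_diff, Set.mem_singleton_iff,
    Finset.mem_erase, mem_edgeFS]
  tauto

private lemma card_edgeFS_delete (hadj : G.Adj u v) :
    (edgeFS (G.deleteEdges {s(u,v)})).card = (edgeFS G).card - 1 := by
  rw [edgeFS_delete, Finset.card_erase_of_mem (mem_edgeFS.2 (G.mem_edgeSet.2 hadj))]

private lemma card_edgeFS_contract (hadj : G.Adj u v) :
    (edgeFS (contractE (G.deleteEdges {s(u,v)}) u v gd_not_adj)).card
      ≤ (edgeFS (G.deleteEdges {s(u,v)})).card := by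
  classical
  have hne : u ≠ v := G.ne_of_adj hadj
  set Gd := G.deleteEdges {s(u,v)} with hGd
  set Gc := contractE Gd u v gd_not_adj with hGc
  let π : V → {w : V // w ≠ v} := fun w => if h : w = v then ⟨u, hne⟩ else ⟨w, h⟩
  have hπ : ∀ (w : V) (hw : w ≠ v), π w = ⟨w, hw⟩ := fun w hw => dif_neg hw
  have hπv : π v = ⟨u, hne⟩ := dif_pos rfl
  refine Finset.card_le_card_of_surjOn (Sym2.map π) ?_
  intro ee
  induction ee using Sym2.inductionOn with
  | hf a b =>
    intro hee
    rw [Finset.mem_coe, mem_edgeFS, SimpleGraph.mem_edgeSet] at hee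
    rcases hee with h1 | ⟨ha, h2⟩ | ⟨hb, h3⟩
    · refine ⟨s(a.1, b.1), ?_, ?_⟩
      · rw [Finset.mem_coe, mem_edgeFS, SimpleGraph.mem_edgeSet]; exact h1
      · rw [Sym2.map_pair_eq, hπ a.1 a.2, hπ b.1 b.2]
    · refine ⟨s(v, b.1), ?_, ?_⟩
      · rw [Finset.mem_coe, mem_edgeFS, SimpleGraph.mem_edgeSet]; exact h2
      · rw [Sym2.map_pair_eq, hπv, hπ b.1 b.2, Sym2.eq_iff]
        left
        exact ⟨(Subtype.ext ha.symm : (⟨u, hne⟩ : {w : V // w ≠ v}) = a), rfl⟩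
    · refine ⟨s(a.1, v), ?_, ?_⟩
      · rw [Finset.mem_coe, mem_edgeFS, SimpleGraph.mem_edgeSet]; exact h3
      · rw [Sym2.map_pair_eq, hπv, hπ a.1 a.2, Sym2.eq_iff]
        left
        exact ⟨rfl, (Subtype.ext hb.symm : (⟨u, hne⟩ : {w : V // w ≠ v}) = b)⟩

end EdgeCount

section BotCase
variable {V : Type}

private def botCCEquiv (V : Type) : V ≃ (⊥ : SimpleGraph V).ConnectedComponent where
  toFun := (⊥ : SimpleGraph V).connectedComponentMk
  invFun := Quot.lift id (fun a b hab => SimpleGraph.reachable_bot.1 hab)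
  left_inv v := rfl
  right_inv c := by induction c using SimpleGraph.ConnectedComponent.ind; rfl

private lemma ncc_bot : Nat.card (⊥ : SimpleGraph V).ConnectedComponent = Nat.card V :=
  (Nat.card_congr (botCCEquiv V)).symm

private lemma eq_bot_of_no_adj {G : SimpleGraph V} (h : ¬ ∃ a b, G.Adj a b) : G = ⊥ := by
  ext a b
  simp only [SimpleGraph.bot_adj, iff_false]
  exact fun hab => h ⟨a, b, hab⟩

private lemma whitney_bot [Fintype V] : whitney (⊥ : SimpleGraph V) = X ^ (Fintype.card V) := by
  have h0 : edgeFS (⊥ : SimpleGraph V) = ∅ := by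
    ext e; simp [mem_edgeFS]
  rw [whitney, h0, Finset.powerset_empty, Finset.sum_singleton]
  have h1 : nccF (V := V) ∅ = Fintype.card V := by
    rw [nccF, Finset.coe_empty, SimpleGraph.fromEdgeSet_empty, ncc_bot, Nat.card_eq_fintype_card]
  rw [h1]
  simp

private lemma aoc_bot : acyclicOrientationCount (⊥ : SimpleGraph V) = 1 := by
  rw [acyclicOrientationCount]
  have hsub : Subsingleton { r : V → V → Prop // (∀ u v, r u v → (⊥ : SimpleGraph V).Adj u v) ∧
      (∀ u v, (⊥ : SimpleGraph V).Adj u v → Xor' (r u v) (r v u)) ∧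
      (∀ v, ¬ Relation.TransGen r v v) } := by
    constructor
    rintro ⟨r, hr, -, -⟩ ⟨r', hr', -, -⟩
    apply Subtype.ext
    funext a b
    apply propext
    constructor
    · intro h; exact absurd (hr a b h) (by simp)
    · intro h; exact absurd (hr' a b h) (by simp)
  have hne : Nonempty { r : V → V → Prop // (∀ u v, r u v → (⊥ : SimpleGraph V).Adj u v) ∧
      (∀ u v, (⊥ : SimpleGraph V).Adj u v → Xor' (r u v) (r v u)) ∧
      (∀ v, ¬ Relation.TransGen r v v) } := by
    refine ⟨⟨fun _ _ => False, fun a b h => h.elim, fun a b h => (by simp at h), fun a htc => ?_⟩⟩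
    cases htc with
    | single h => exact h
    | tail _ h => exact h
  haveI := hsub
  haveI := hne
  exact Nat.card_eq_one_iff_unique.2 ⟨hsub, hne⟩

end BotCase
set_option linter.unusedSectionVars false
set_option linter.unusedVariables false

section OrientRec

private def isAO {W : Type} (H : SimpleGraph W) (r : W → W → Prop) : Prop :=
  (∀ a b, r a b → H.Adj a b) ∧ (∀ a b, H.Adj a b → Xor' (r a b) (r b a)) ∧
    (∀ a, ¬ Relation.TransGen r a a)

private lemma aoc_eq_card {W : Type} (H : SimpleGraph W) :
    acyclicOrientationCount H = Nat.card {r : W → W → Prop // isAO H r} := rfl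

private def extP {W : Type} (p q : W) (τ : W → W → Prop) : W → W → Prop :=
  fun a b => τ a b ∨ (a = p ∧ b = q)

private lemma transGen_extP {W : Type} {τ : W → W → Prop} {p q : W}
    {x y : W} (h : Relation.TransGen (extP p q τ) x y) :
    Relation.TransGen τ x y ∨ (Relation.ReflTransGen τ x p ∧ Relation.ReflTransGen τ q y) := by
  induction h with
  | single h1 =>
    rcases h1 with h1 | ⟨rfl, rfl⟩
    · exact Or.inl (Relation.TransGen.single h1)
    · exact Or.inr ⟨Relation.ReflTransGen.refl, Relation.ReflTransGen.refl⟩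
  | tail hp h1 ih =>
    rcases h1 with h1 | ⟨rfl, rfl⟩
    · rcases ih with ih | ⟨ih1, ih2⟩
      · exact Or.inl (ih.tail h1)
      · exact Or.inr ⟨ih1, ih2.tail h1⟩
    · rcases ih with ih | ⟨ih1, ih2⟩
      · exact Or.inr ⟨ih.to_reflTransGen, Relation.ReflTransGen.refl⟩
      · exact Or.inr ⟨ih1, Relation.ReflTransGen.refl⟩

private lemma acyclic_extP {W : Type} {τ : W → W → Prop} {p q : W} (hpq : p ≠ q)
    (hτ : ∀ a, ¬ Relation.TransGen τ a a) (hqp : ¬ Relation.TransGen τ q p) :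
    ∀ a, ¬ Relation.TransGen (extP p q τ) a a := by
  intro a ha
  rcases transGen_extP ha with h | ⟨h1, h2⟩
  · exact hτ a h
  · have h3 : Relation.ReflTransGen τ q p := h2.trans h1
    rcases Relation.reflTransGen_iff_eq_or_transGen.1 h3 with h4 | h4
    · exact hpq h4
    · exact hqp h4

variable {V : Type} [DecidableEq V]

private def PiMap (u v : V) (hne : u ≠ v) : V → {w : V // w ≠ v} :=
  fun w => if h : w = v then ⟨u, hne⟩ else ⟨w, h⟩

private def liftCD (Gd : SimpleGraph V) {u v : V} (hne : u ≠ v)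
    (σ : {w : V // w ≠ v} → {w : V // w ≠ v} → Prop) : V → V → Prop :=
  fun a b => Gd.Adj a b ∧ σ (PiMap u v hne a) (PiMap u v hne b)

private def projCD (u v : V) (τ : V → V → Prop) :
    {w : V // w ≠ v} → {w : V // w ≠ v} → Prop :=
  fun x y => τ x.1 y.1 ∨ (x.1 = u ∧ τ v y.1) ∨ (y.1 = u ∧ τ x.1 v)

private def restrD (Gd : SimpleGraph V) (r : V → V → Prop) : V → V → Prop :=
  fun a b => r a b ∧ Gd.Adj a b

private def clsP (u : V) (x : {w : V // w ≠ v}) (a : V) : Prop :=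
  a = x.1 ∨ (x.1 = u ∧ a = v)

private lemma cls_two {u : V} {x : {w : V // w ≠ v}} {p q : V}
    (hp : clsP u x p) (hq : clsP u x q) (hpq : p ≠ q) :
    (p = u ∧ q = v) ∨ (p = v ∧ q = u) := by
  rcases hp with hp | ⟨hxu, hp⟩ <;> rcases hq with hq | ⟨hxu', hq⟩
  · exact absurd (hp.trans hq.symm) hpq
  · exact Or.inl ⟨hp.trans hxu', hq⟩
  · exact Or.inr ⟨hp, hq.trans hxu⟩
  · exact absurd (hp.trans hq.symm) hpq

end OrientRec
section OrientRec2
set_option maxHeartbeats 1000000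

variable {V : Type} [DecidableEq V] {G : SimpleGraph V} {u v : V}

private lemma hGdAdj_iff (G : SimpleGraph V) (u v a b : V) :
    (G.deleteEdges {s(u,v)}).Adj a b ↔ (G.Adj a b ∧ s(a,b) ≠ s(u,v)) := by
  rw [SimpleGraph.deleteEdges_adj]; simp

private lemma two_step {τ : V → V → Prop} {a b c : V} (h1 : τ a b) (h2 : τ b c) :
    Relation.TransGen τ a c := (Relation.TransGen.single h1).tail h2

/-- (P1) extending an acyclic orientation of `G - e` across `e`. -/
private lemma isAO_extP_of {p q : V} (hpq : s(p,q) = s(u,v)) (hGpq : G.Adj p q)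
    {τ : V → V → Prop} (hτ : isAO (G.deleteEdges {s(u,v)}) τ)
    (hqp : ¬ Relation.TransGen τ q p) : isAO G (extP p q τ) := by
  obtain ⟨hτ1, hτ2, hτ3⟩ := hτ
  have hpqne : p ≠ q := G.ne_of_adj hGpq
  have hGdle : ∀ a b, (G.deleteEdges {s(u,v)}).Adj a b → G.Adj a b :=
    fun a b h => ((hGdAdj_iff G u v a b).1 h).1
  have hGdpq : ¬ (G.deleteEdges {s(u,v)}).Adj p q := by
    intro h
    exact ((hGdAdj_iff G u v p q).1 h).2 hpq
  have hGdqp : ¬ (G.deleteEdges {s(u,v)}).Adj q p := fun h => hGdpq h.symm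
  refine ⟨?_, ?_, acyclic_extP hpqne hτ3 hqp⟩
  · rintro a b (h | ⟨rfl, rfl⟩)
    · exact hGdle a b (hτ1 a b h)
    · exact hGpq
  · intro a b hab
    by_cases he : s(a,b) = s(u,v)
    · have he2 : s(a,b) = s(p,q) := he.trans hpq.symm
      rw [Sym2.eq_iff] at he2
      rcases he2 with ⟨rfl, rfl⟩ | ⟨rfl, rfl⟩
      · left
        constructor
        · exact Or.inr ⟨rfl, rfl⟩
        · rintro (h | ⟨h1, h2⟩)
          · exact hGdqp (hτ1 _ _ h)
          · first | exact hpqne h1.symm | exact hpqne.symm h1 | exact hpqne h1 | exact hpqne h2.symm | exact hpqne.symm h2 | exact hpqne h2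
      · right
        constructor
        · exact Or.inr ⟨rfl, rfl⟩
        · rintro (h | ⟨h1, h2⟩)
          · exact hGdqp (hτ1 _ _ h)
          · first | exact hpqne h1.symm | exact hpqne.symm h1 | exact hpqne h1 | exact hpqne h2.symm | exact hpqne.symm h2 | exact hpqne h2
    · have hd : (G.deleteEdges {s(u,v)}).Adj a b := (hGdAdj_iff G u v a b).2 ⟨hab, he⟩
      have hpa : ¬ (a = p ∧ b = q) := by
        rintro ⟨rfl, rfl⟩; exact he hpq
      have hpb : ¬ (b = p ∧ a = q) := by
        rintro ⟨rfl, rfl⟩; exact he (Sym2.eq_swap.trans hpq)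
      rcases hτ2 a b hd with ⟨h1, h2⟩ | ⟨h1, h2⟩
      · left
        exact ⟨Or.inl h1, by rintro (h | hh); exacts [h2 h, hpb hh]⟩
      · right
        exact ⟨Or.inl h1, by rintro (h | hh); exacts [h2 h, hpa hh]⟩

private lemma hPiMap_ne (hne : u ≠ v) (w : V) (hw : w ≠ v) : PiMap u v hne w = ⟨w, hw⟩ :=
  dif_neg hw

private lemma hPiMap_v (hne : u ≠ v) : PiMap u v hne v = ⟨u, hne⟩ := dif_pos rfl

private lemma hPiMap_u (hne : u ≠ v) : PiMap u v hne u = ⟨u, hne⟩ := hPiMap_ne hne u hne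

/-- (P2) lifting an acyclic orientation of the contraction. -/
private lemma isAO_liftCD (hadj : G.Adj u v) (hne : u ≠ v)
    {σ : {w : V // w ≠ v} → {w : V // w ≠ v} → Prop}
    (hσ : isAO (contractE (G.deleteEdges {s(u,v)}) u v gd_not_adj) σ) :
    isAO (G.deleteEdges {s(u,v)}) (liftCD (G.deleteEdges {s(u,v)}) hne σ)
      ∧ ¬ Relation.TransGen (liftCD (G.deleteEdges {s(u,v)}) hne σ) u v
      ∧ ¬ Relation.TransGen (liftCD (G.deleteEdges {s(u,v)}) hne σ) v u := by
  obtain ⟨hσ1, hσ2, hσ3⟩ := hσ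
  set Gd := G.deleteEdges {s(u,v)} with hGd
  have hGdvu : ¬ Gd.Adj v u := fun h => gd_not_adj h.symm
  have htg : ∀ a b, Relation.TransGen (liftCD Gd hne σ) a b →
      Relation.TransGen σ (PiMap u v hne a) (PiMap u v hne b) :=
    fun a b h => Relation.TransGen.lift (PiMap u v hne) (fun a b hab => hab.2) a b h
  have hpicl : ∀ a b, Gd.Adj a b →
      (contractE Gd u v gd_not_adj).Adj (PiMap u v hne a) (PiMap u v hne b) := by
    intro a b hab
    by_cases hav : a = v
    · have hvb : Gd.Adj v b := hav ▸ hab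
      have hbv : b ≠ v := fun hbv => Gd.irrefl (hbv ▸ hvb)
      rw [hav, hPiMap_v hne, hPiMap_ne hne b hbv]
      exact Or.inr (Or.inl ⟨rfl, hvb⟩)
    · by_cases hbv : b = v
      · have hav2 : Gd.Adj a v := hbv ▸ hab
        rw [hbv, hPiMap_v hne, hPiMap_ne hne a hav]
        exact Or.inr (Or.inr ⟨rfl, hav2⟩)
      · rw [hPiMap_ne hne a hav, hPiMap_ne hne b hbv]
        exact Or.inl hab
  refine ⟨⟨fun a b h => h.1, ?_, fun a h => hσ3 _ (htg a a h)⟩, ?_, ?_⟩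
  · intro a b hab
    rcases hσ2 _ _ (hpicl a b hab) with ⟨h1, h2⟩ | ⟨h1, h2⟩
    · exact Or.inl ⟨⟨hab, h1⟩, fun hc => h2 hc.2⟩
    · exact Or.inr ⟨⟨hab.symm, h1⟩, fun hc => h2 hc.2⟩
  · intro h
    have := htg _ _ h
    rw [hPiMap_u hne, hPiMap_v hne] at this
    exact hσ3 _ this
  · intro h
    have := htg _ _ h
    rw [hPiMap_u hne, hPiMap_v hne] at this
    exact hσ3 _ this

/-- (P4) restriction of an acyclic orientation of `G` to `G - e`. -/
private lemma isAO_restrD {r : V → V → Prop} (hr : isAO G r) :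
    isAO (G.deleteEdges {s(u,v)}) (restrD (G.deleteEdges {s(u,v)}) r) := by
  obtain ⟨hr1, hr2, hr3⟩ := hr
  refine ⟨fun a b h => h.2, ?_, ?_⟩
  · intro a b hab
    have hG : G.Adj a b := ((hGdAdj_iff G u v a b).1 hab).1
    rcases hr2 a b hG with ⟨h1, h2⟩ | ⟨h1, h2⟩
    · exact Or.inl ⟨⟨h1, hab⟩, fun hc => h2 hc.1⟩
    · exact Or.inr ⟨⟨h1, hab.symm⟩, fun hc => h2 hc.1⟩
  · intro a h
    exact hr3 a (Relation.TransGen.mono (fun x y hxy => hxy.1) a a h)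

/-- (R1) restriction recovers the orientation after extension. -/
private lemma restrD_extP {p q : V} (hpq : s(p,q) = s(u,v)) {τ : V → V → Prop}
    (hτ1 : ∀ a b, τ a b → (G.deleteEdges {s(u,v)}).Adj a b) :
    restrD (G.deleteEdges {s(u,v)}) (extP p q τ) = τ := by
  funext a b
  apply propext
  constructor
  · rintro ⟨h | ⟨rfl, rfl⟩, hd⟩
    · exact h
    · exact absurd hpq (((hGdAdj_iff G u v _ _).1 hd).2)
  · intro h
    exact ⟨Or.inl h, hτ1 a b h⟩

end OrientRec2
section OrientRec3
set_option maxHeartbeats 1000000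

variable {V : Type} [DecidableEq V] {G : SimpleGraph V} {u v : V}

/-- (R3) projecting a lifted orientation gives it back. -/
private lemma projCD_liftCD (hne : u ≠ v)
    {σ : {w : V // w ≠ v} → {w : V // w ≠ v} → Prop}
    (hσ : isAO (contractE (G.deleteEdges {s(u,v)}) u v gd_not_adj) σ) :
    projCD u v (liftCD (G.deleteEdges {s(u,v)}) hne σ) = σ := by
  obtain ⟨hσ1, hσ2, hσ3⟩ := hσ
  set Gd := G.deleteEdges {s(u,v)} with hGdd
  funext x y
  apply propext
  have hπx : PiMap u v hne x.1 = x := by rw [hPiMap_ne hne x.1 x.2]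
  have hπy : PiMap u v hne y.1 = y := by rw [hPiMap_ne hne y.1 y.2]
  constructor
  · rintro (⟨hd, hσxy⟩ | ⟨hxu, hd, hσvy⟩ | ⟨hyu, hd, hσxv⟩)
    · rwa [hπx, hπy] at hσxy
    · rw [hPiMap_v hne, hπy] at hσvy
      have hx : x = ⟨u, hne⟩ := Subtype.ext hxu
      rw [hx]; exact hσvy
    · rw [hπx, hPiMap_v hne] at hσxv
      have hy : y = ⟨u, hne⟩ := Subtype.ext hyu
      rw [hy]; exact hσxv
  · intro hσxy
    rcases hσ1 _ _ hσxy with hd | ⟨hxu, hd⟩ | ⟨hyu, hd⟩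
    · exact Or.inl ⟨hd, by rwa [hπx, hπy]⟩
    · refine Or.inr (Or.inl ⟨hxu, hd, ?_⟩)
      rw [hPiMap_v hne, hπy]
      have hx : x = ⟨u, hne⟩ := Subtype.ext hxu
      rw [← hx]; exact hσxy
    · refine Or.inr (Or.inr ⟨hyu, hd, ?_⟩)
      rw [hπx, hPiMap_v hne]
      have hy : y = ⟨u, hne⟩ := Subtype.ext hyu
      rw [← hy]; exact hσxy

/-- (P6) lifting a projected orientation gives it back, under the no-path condition. -/
private lemma liftCD_projCD (hne : u ≠ v) {τ : V → V → Prop}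
    (hτ : isAO (G.deleteEdges {s(u,v)}) τ)
    (hnuv : ¬ Relation.TransGen τ u v) (hnvu : ¬ Relation.TransGen τ v u) :
    liftCD (G.deleteEdges {s(u,v)}) hne (projCD u v τ) = τ := by
  obtain ⟨hτ1, hτ2, hτ3⟩ := hτ
  set Gd := G.deleteEdges {s(u,v)} with hGdd
  have hGduv : ¬ Gd.Adj u v := gd_not_adj
  have hGdvu : ¬ Gd.Adj v u := fun h => hGduv h.symm
  funext a b
  apply propext
  constructor
  · rintro ⟨hd, hproj⟩
    by_cases hav : a = v
    · have hdvb : Gd.Adj v b := hav ▸ hd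
      have hbv : b ≠ v := fun hbv => Gd.irrefl (hbv ▸ hdvb)
      have hbu : b ≠ u := fun hbu => hGdvu (hbu ▸ hdvb)
      rw [hav, hPiMap_v hne, hPiMap_ne hne b hbv] at hproj
      rcases hproj with h1 | ⟨-, h2⟩ | ⟨hbu', -⟩
      · rcases hτ2 v b hdvb with ⟨hh, -⟩ | ⟨hh, -⟩
        · rw [hav]; exact hh
        · exact absurd (two_step h1 hh) hnuv
      · rw [hav]; exact h2
      · exact absurd hbu' hbu
    · by_cases hbv : b = v
      · have hdav : Gd.Adj a v := hbv ▸ hd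
        have hau : a ≠ u := fun hau => hGduv (hau ▸ hdav)
        rw [hbv, hPiMap_ne hne a hav, hPiMap_v hne] at hproj
        rcases hproj with h1 | ⟨hau', -⟩ | ⟨-, h2⟩
        · rcases hτ2 a v hdav with ⟨hh, -⟩ | ⟨hh, -⟩
          · rw [hbv]; exact hh
          · exact absurd (two_step hh h1) hnvu
        · exact absurd hau' hau
        · rw [hbv]; exact h2
      · rw [hPiMap_ne hne a hav, hPiMap_ne hne b hbv] at hproj
        rcases hproj with h1 | ⟨hau, h2⟩ | ⟨hbu, h2⟩
        · exact h1
        · rcases hτ2 a b hd with ⟨hh, -⟩ | ⟨hh, -⟩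
          · exact hh
          · exact absurd (hau ▸ two_step h2 hh) hnvu
        · rcases hτ2 a b hd with ⟨hh, -⟩ | ⟨hh, -⟩
          · exact hh
          · exact absurd (hbu ▸ two_step hh h2) hnuv
  · intro hτab
    have hd : Gd.Adj a b := hτ1 _ _ hτab
    refine ⟨hd, ?_⟩
    by_cases hav : a = v
    · have hdvb : Gd.Adj v b := hav ▸ hd
      have hbv : b ≠ v := fun hbv => Gd.irrefl (hbv ▸ hdvb)
      rw [hav, hPiMap_v hne, hPiMap_ne hne b hbv]
      exact Or.inr (Or.inl ⟨rfl, hav ▸ hτab⟩)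
    · by_cases hbv : b = v
      · rw [hbv, hPiMap_ne hne a hav, hPiMap_v hne]
        exact Or.inr (Or.inr ⟨rfl, hbv ▸ hτab⟩)
      · rw [hPiMap_ne hne a hav, hPiMap_ne hne b hbv]
        exact Or.inl hτab

private lemma xor_or_helper {P Q P' Q' : Prop} (hex : P ∨ P' ∨ Q ∨ Q')
    (h1 : ¬(P ∧ P')) (h2 : ¬(P ∧ Q')) (h3 : ¬(Q ∧ P')) (h4 : ¬(Q ∧ Q')) :
    Xor' (P ∨ Q) (P' ∨ Q') := by
  simp only [Xor']
  tauto

/-- (P5) the projected orientation is an acyclic orientation of the contraction. -/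
private lemma isAO_projCD (hne : u ≠ v) {τ : V → V → Prop}
    (hτ : isAO (G.deleteEdges {s(u,v)}) τ)
    (hnuv : ¬ Relation.TransGen τ u v) (hnvu : ¬ Relation.TransGen τ v u) :
    isAO (contractE (G.deleteEdges {s(u,v)}) u v gd_not_adj) (projCD u v τ) := by
  obtain ⟨hτ1, hτ2, hτ3⟩ := hτ
  set Gd := G.deleteEdges {s(u,v)} with hGdd
  have hGduv : ¬ Gd.Adj u v := gd_not_adj
  have hGdvu : ¬ Gd.Adj v u := fun h => hGduv h.symm
  refine ⟨?_, ?_, ?_⟩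
  · rintro x y (h | ⟨hxu, h⟩ | ⟨hyu, h⟩)
    · exact Or.inl (hτ1 _ _ h)
    · exact Or.inr (Or.inl ⟨hxu, hτ1 _ _ h⟩)
    · exact Or.inr (Or.inr ⟨hyu, hτ1 _ _ h⟩)
  · intro x y hxy
    have hne' : x ≠ y := (contractE Gd u v gd_not_adj).ne_of_adj hxy
    have hx1y1 : x.1 ≠ y.1 := fun h => hne' (Subtype.ext h)
    by_cases hxu : x.1 = u
    · have hyu : ¬ (y.1 = u) := fun h => hx1y1 (hxu.trans h.symm)
      -- atoms P = τ x.1 y.1, Q = τ v y.1, P' = τ y.1 x.1, Q' = τ y.1 v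
      have hnPP' : ¬ (τ x.1 y.1 ∧ τ y.1 x.1) := fun ⟨h1, h2⟩ => hτ3 _ (two_step h1 h2)
      have hnQQ' : ¬ (τ v y.1 ∧ τ y.1 v) := fun ⟨h1, h2⟩ => hτ3 _ (two_step h1 h2)
      have hnPQ' : ¬ (τ x.1 y.1 ∧ τ y.1 v) := fun ⟨h1, h2⟩ => hnuv (hxu ▸ two_step h1 h2)
      have hnQP' : ¬ (τ v y.1 ∧ τ y.1 x.1) := fun ⟨h1, h2⟩ => hnvu (hxu ▸ two_step h1 h2)
      have hex : τ x.1 y.1 ∨ τ y.1 x.1 ∨ τ v y.1 ∨ τ y.1 v := by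
        rcases hxy with hd | ⟨-, hd⟩ | ⟨hyu', -⟩
        · rcases hτ2 _ _ hd with ⟨h1, -⟩ | ⟨h1, -⟩
          · exact Or.inl h1
          · exact Or.inr (Or.inl h1)
        · rcases hτ2 _ _ hd with ⟨h1, -⟩ | ⟨h1, -⟩
          · exact Or.inr (Or.inr (Or.inl h1))
          · exact Or.inr (Or.inr (Or.inr h1))
        · exact absurd hyu' hyu
      have hgoal : Xor' (τ x.1 y.1 ∨ τ v y.1) (τ y.1 x.1 ∨ τ y.1 v) :=
        xor_or_helper hex hnPP' hnPQ' hnQP' hnQQ'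
      simpa only [projCD, iff_true_intro hxu, iff_false_intro hyu, true_and, false_and,
        or_false, false_or] using hgoal
    · by_cases hyu : y.1 = u
      · -- atoms P = τ x.1 y.1, Q = τ x.1 v, P' = τ y.1 x.1, Q' = τ v x.1
        have hnPP' : ¬ (τ x.1 y.1 ∧ τ y.1 x.1) := fun ⟨h1, h2⟩ => hτ3 _ (two_step h1 h2)
        have hnQQ' : ¬ (τ x.1 v ∧ τ v x.1) := fun ⟨h1, h2⟩ => hτ3 _ (two_step h1 h2)
        have hnPQ' : ¬ (τ x.1 y.1 ∧ τ v x.1) := fun ⟨h1, h2⟩ => hnvu (hyu ▸ two_step h2 h1)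
        have hnQP' : ¬ (τ x.1 v ∧ τ y.1 x.1) := fun ⟨h1, h2⟩ => hnuv (hyu ▸ two_step h2 h1)
        have hex : τ x.1 y.1 ∨ τ y.1 x.1 ∨ τ x.1 v ∨ τ v x.1 := by
          rcases hxy with hd | ⟨hxu', -⟩ | ⟨-, hd⟩
          · rcases hτ2 _ _ hd with ⟨h1, -⟩ | ⟨h1, -⟩
            · exact Or.inl h1
            · exact Or.inr (Or.inl h1)
          · exact absurd hxu' hxu
          · rcases hτ2 _ _ hd with ⟨h1, -⟩ | ⟨h1, -⟩
            · exact Or.inr (Or.inr (Or.inl h1))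
            · exact Or.inr (Or.inr (Or.inr h1))
        have hgoal : Xor' (τ x.1 y.1 ∨ τ x.1 v) (τ y.1 x.1 ∨ τ v x.1) :=
          xor_or_helper hex hnPP' hnPQ' hnQP' hnQQ'
        simpa only [projCD, iff_true_intro hyu, iff_false_intro hxu, true_and, false_and,
          or_false, false_or] using hgoal
      · have hd : Gd.Adj x.1 y.1 := by
          rcases hxy with hd | ⟨hxu', -⟩ | ⟨hyu', -⟩
          · exact hd
          · exact absurd hxu' hxu
          · exact absurd hyu' hyu
        have hgoal : Xor' (τ x.1 y.1) (τ y.1 x.1) := hτ2 _ _ hd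
        simpa only [projCD, iff_false_intro hxu, iff_false_intro hyu, false_and,
          or_false, false_or] using hgoal
  · -- acyclicity
    have key : ∀ x y, Relation.TransGen (projCD u v τ) x y →
        (∃ a b, clsP u x a ∧ clsP u y b ∧ Relation.TransGen τ a b) ∨
        (∃ a b w w', clsP u x a ∧ clsP u y b ∧ ((w = u ∧ w' = v) ∨ (w = v ∧ w' = u)) ∧
          Relation.TransGen τ a w ∧ Relation.TransGen τ w' b) := by
      have base : ∀ x y, projCD u v τ x y →
          ∃ a b, clsP u x a ∧ clsP u y b ∧ Relation.TransGen τ a b := by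
        rintro x y (h | ⟨hxu, h⟩ | ⟨hyu, h⟩)
        · exact ⟨x.1, y.1, Or.inl rfl, Or.inl rfl, Relation.TransGen.single h⟩
        · exact ⟨v, y.1, Or.inr ⟨hxu, rfl⟩, Or.inl rfl, Relation.TransGen.single h⟩
        · exact ⟨x.1, v, Or.inl rfl, Or.inr ⟨hyu, rfl⟩, Relation.TransGen.single h⟩
      intro x y h
      induction h with
      | single h1 => exact Or.inl (base _ _ h1)
      | tail hp h1 ih =>
        rename_i c y'
        obtain ⟨a₂, b₂, hca₂, hyb₂, T₂⟩ := base _ _ h1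
        rcases ih with ⟨a, b₁, hxa, hcb₁, T⟩ | ⟨a, b₁, w, w', hxa, hcb₁, hww', T₁, Tmid⟩
        · by_cases hb : b₁ = a₂
          · exact Or.inl ⟨a, b₂, hxa, hyb₂, T.trans (hb ▸ T₂)⟩
          · rcases cls_two hcb₁ hca₂ hb with ⟨h1, h2⟩ | ⟨h1, h2⟩
            · exact Or.inr ⟨a, b₂, u, v, hxa, hyb₂, Or.inl ⟨rfl, rfl⟩, h1 ▸ T, h2 ▸ T₂⟩
            · exact Or.inr ⟨a, b₂, v, u, hxa, hyb₂, Or.inr ⟨rfl, rfl⟩, h1 ▸ T, h2 ▸ T₂⟩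
        · by_cases hb : b₁ = a₂
          · exact Or.inr ⟨a, b₂, w, w', hxa, hyb₂, hww', T₁, Tmid.trans (hb ▸ T₂)⟩
          · exfalso
            rcases cls_two hcb₁ hca₂ hb with ⟨h1, h2⟩ | ⟨h1, h2⟩
            · rcases hww' with ⟨hw, hw'⟩ | ⟨hw, hw'⟩
              · exact hnvu (hw' ▸ h1 ▸ Tmid)
              · refine hτ3 u ?_
                have hT := h1 ▸ Tmid
                rwa [hw'] at hT
            · rcases hww' with ⟨hw, hw'⟩ | ⟨hw, hw'⟩
              · refine hτ3 v ?_
                have hT := h1 ▸ Tmid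
                rwa [hw'] at hT
              · exact hnuv (hw' ▸ h1 ▸ Tmid)
    intro x hcyc
    rcases key x x hcyc with ⟨a, b, hxa, hxb, T⟩ | ⟨a, b, w, w', hxa, hxb, hww', T₁, T₂⟩
    · by_cases hab : a = b
      · exact hτ3 a (hab ▸ T)
      · rcases cls_two hxa hxb hab with ⟨h1, h2⟩ | ⟨h1, h2⟩
        · exact hnuv (h1 ▸ h2 ▸ T)
        · exact hnvu (h1 ▸ h2 ▸ T)
    · by_cases hab : a = b
      · rcases hww' with ⟨hw, hw'⟩ | ⟨hw, hw'⟩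
        · exact hnvu (hw ▸ hw' ▸ (T₂.trans (hab ▸ T₁)))
        · exact hnuv (hw ▸ hw' ▸ (T₂.trans (hab ▸ T₁)))
      · rcases cls_two hxa hxb hab with ⟨h1, h2⟩ | ⟨h1, h2⟩
        · rcases hww' with ⟨hw, hw'⟩ | ⟨hw, hw'⟩
          · refine hτ3 u ?_
            have hT := h1 ▸ T₁
            rwa [hw] at hT
          · exact hnuv (hw ▸ h1 ▸ T₁)
        · rcases hww' with ⟨hw, hw'⟩ | ⟨hw, hw'⟩
          · exact hnvu (hw ▸ h1 ▸ T₁)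
          · refine hτ3 v ?_
            have hT := h1 ▸ T₁
            rwa [hw] at hT

end OrientRec3
section OrientRec4
set_option maxHeartbeats 1600000

variable {V : Type} [Fintype V] [DecidableEq V]

private lemma aoc_rec {G : SimpleGraph V} {u v : V} (hadj : G.Adj u v) :
    acyclicOrientationCount G
      = acyclicOrientationCount (G.deleteEdges {s(u,v)})
        + acyclicOrientationCount (contractE (G.deleteEdges {s(u,v)}) u v gd_not_adj) := by
  classical
  have hne : u ≠ v := G.ne_of_adj hadj
  rw [aoc_eq_card, aoc_eq_card, aoc_eq_card]
  have pfA : ∀ τ : V → V → Prop, isAO (G.deleteEdges {s(u,v)}) τ →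
      Relation.TransGen τ u v → isAO G (extP u v τ) := by
    intro τ hτ h
    exact isAO_extP_of rfl hadj hτ (fun hvu => hτ.2.2 u (h.trans hvu))
  have pfB : ∀ τ : V → V → Prop, isAO (G.deleteEdges {s(u,v)}) τ →
      ¬ Relation.TransGen τ u v → isAO G (extP v u τ) := by
    intro τ hτ h
    exact isAO_extP_of Sym2.eq_swap hadj.symm hτ h
  have pfC : ∀ σ, isAO (contractE (G.deleteEdges {s(u,v)}) u v gd_not_adj) σ →
      isAO G (extP u v (liftCD (G.deleteEdges {s(u,v)}) hne σ)) := by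
    intro σ hσ
    obtain ⟨h1, h2, h3⟩ := isAO_liftCD hadj hne hσ
    exact isAO_extP_of rfl hadj h1 h3
  set Φ : ({τ : V → V → Prop // isAO (G.deleteEdges {s(u,v)}) τ}
      ⊕ {σ : {w : V // w ≠ v} → {w : V // w ≠ v} → Prop //
          isAO (contractE (G.deleteEdges {s(u,v)}) u v gd_not_adj) σ})
      → {r : V → V → Prop // isAO G r} :=
    Sum.elim
      (fun t => if h : Relation.TransGen t.1 u v then ⟨extP u v t.1, pfA t.1 t.2 h⟩
        else ⟨extP v u t.1, pfB t.1 t.2 h⟩)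
      (fun s => ⟨extP u v (liftCD (G.deleteEdges {s(u,v)}) hne s.1), pfC s.1 s.2⟩) with hΦ
  have hval_inl : ∀ t, restrD (G.deleteEdges {s(u,v)}) (Φ (Sum.inl t)).1 = t.1 := by
    intro t
    rw [hΦ]
    simp only [Sum.elim_inl]
    by_cases h : Relation.TransGen t.1 u v
    · rw [dif_pos h]
      exact restrD_extP rfl (fun a b hab => t.2.1 a b hab)
    · rw [dif_neg h]
      exact restrD_extP Sym2.eq_swap (fun a b hab => t.2.1 a b hab)
  have hval_inr : ∀ s, (Φ (Sum.inr s)).1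
      = extP u v (liftCD (G.deleteEdges {s(u,v)}) hne s.1) := by
    intro s; rw [hΦ]; simp only [Sum.elim_inr]
  have hinj : Function.Injective Φ := by
    rintro (t | s) (t' | s') heq
    · have h1 := hval_inl t
      have h2 := hval_inl t'
      rw [heq] at h1
      exact congrArg Sum.inl (Subtype.ext (h1.symm.trans h2))
    · exfalso
      have hr : isAO G (Φ (Sum.inl t)).1 := (Φ (Sum.inl t)).2
      have hres := hval_inl t
      have hres2 : restrD (G.deleteEdges {s(u,v)}) (Φ (Sum.inr s')).1
          = liftCD (G.deleteEdges {s(u,v)}) hne s'.1 := by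
        rw [hval_inr s']
        exact restrD_extP rfl (fun a b hab => hab.1)
      have hteq : t.1 = liftCD (G.deleteEdges {s(u,v)}) hne s'.1 := by
        rw [← hres, ← hres2, heq]
      obtain ⟨hl1, hl2, hl3⟩ := isAO_liftCD hadj hne s'.2
      by_cases h : Relation.TransGen t.1 u v
      · rw [hteq] at h; exact hl2 h
      · have hrvu : (Φ (Sum.inl t)).1 v u := by
          rw [hΦ]; simp only [Sum.elim_inl]; rw [dif_neg h]
          exact Or.inr ⟨rfl, rfl⟩
        have hruv : (Φ (Sum.inl t)).1 u v := by
          rw [heq, hval_inr s']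
          exact Or.inr ⟨rfl, rfl⟩
        rcases hr.2.1 u v hadj with ⟨-, hn⟩ | ⟨-, hn⟩
        · exact hn hrvu
        · exact hn hruv
    · exfalso
      have hr : isAO G (Φ (Sum.inl t')).1 := (Φ (Sum.inl t')).2
      have hres := hval_inl t'
      have hres2 : restrD (G.deleteEdges {s(u,v)}) (Φ (Sum.inr s)).1
          = liftCD (G.deleteEdges {s(u,v)}) hne s.1 := by
        rw [hval_inr s]
        exact restrD_extP rfl (fun a b hab => hab.1)
      have hteq : t'.1 = liftCD (G.deleteEdges {s(u,v)}) hne s.1 := by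
        rw [← hres, ← hres2, heq]
      obtain ⟨hl1, hl2, hl3⟩ := isAO_liftCD hadj hne s.2
      by_cases h : Relation.TransGen t'.1 u v
      · rw [hteq] at h; exact hl2 h
      · have hrvu : (Φ (Sum.inl t')).1 v u := by
          rw [hΦ]; simp only [Sum.elim_inl]; rw [dif_neg h]
          exact Or.inr ⟨rfl, rfl⟩
        have hruv : (Φ (Sum.inl t')).1 u v := by
          rw [← heq, hval_inr s]
          exact Or.inr ⟨rfl, rfl⟩
        rcases hr.2.1 u v hadj with ⟨-, hn⟩ | ⟨-, hn⟩
        · exact hn hrvu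
        · exact hn hruv
    · have h1 := hval_inr s
      have h2 := hval_inr s'
      rw [heq] at h1
      have hl := h1.symm.trans h2
      have hll := congrArg (restrD (G.deleteEdges {s(u,v)})) hl
      rw [restrD_extP rfl (fun a b hab => hab.1),
        restrD_extP rfl (fun a b hab => hab.1)] at hll
      have hs : s.1 = s'.1 := by
        rw [← projCD_liftCD hne s.2, ← projCD_liftCD hne s'.2, hll]
      exact congrArg Sum.inr (Subtype.ext hs)
  have hsurj : Function.Surjective Φ := by
    rintro ⟨r, hr⟩
    have hτ : isAO (G.deleteEdges {s(u,v)}) (restrD (G.deleteEdges {s(u,v)}) r) :=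
      isAO_restrD hr
    have hext_eq : ∀ p q : V, s(p,q) = s(u,v) → G.Adj p q → r p q →
        extP p q (restrD (G.deleteEdges {s(u,v)}) r) = r := by
      intro p q hpq hGpq hrpq
      funext a b
      apply propext
      constructor
      · rintro (⟨hrab, -⟩ | ⟨rfl, rfl⟩)
        · exact hrab
        · exact hrpq
      · intro hrab
        by_cases he : s(a,b) = s(u,v)
        · have he2 : s(a,b) = s(p,q) := he.trans hpq.symm
          rw [Sym2.eq_iff] at he2
          rcases he2 with ⟨rfl, rfl⟩ | ⟨rfl, rfl⟩
          · exact Or.inr ⟨rfl, rfl⟩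
          · exfalso
            rcases hr.2.1 _ _ hGpq with ⟨-, hn⟩ | ⟨-, hn⟩
            · exact hn hrab
            · exact hn hrpq
        · exact Or.inl ⟨hrab, (hGdAdj_iff G u v a b).2 ⟨hr.1 a b hrab, he⟩⟩
    rcases hr.2.1 u v hadj with ⟨hruv, hrvu⟩ | ⟨hrvu, hruv⟩
    · by_cases hP : Relation.TransGen (restrD (G.deleteEdges {s(u,v)}) r) u v
      · refine ⟨Sum.inl ⟨_, hτ⟩, ?_⟩
        apply Subtype.ext
        rw [hΦ]; simp only [Sum.elim_inl]; rw [dif_pos hP]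
        exact hext_eq u v rfl hadj hruv
      · have hP' : ¬ Relation.TransGen (restrD (G.deleteEdges {s(u,v)}) r) v u := by
          intro h
          have h2 : Relation.TransGen r v u :=
            Relation.TransGen.mono (fun a b hab => hab.1) v u h
          exact hr.2.2 u (Relation.TransGen.head hruv h2)
        refine ⟨Sum.inr ⟨projCD u v (restrD (G.deleteEdges {s(u,v)}) r),
          isAO_projCD hne hτ hP hP'⟩, ?_⟩
        apply Subtype.ext
        rw [hval_inr, liftCD_projCD hne hτ hP hP']
        exact hext_eq u v rfl hadj hruv
    · have hP : ¬ Relation.TransGen (restrD (G.deleteEdges {s(u,v)}) r) u v := by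
        intro h
        have h2 : Relation.TransGen r u v :=
          Relation.TransGen.mono (fun a b hab => hab.1) u v h
        exact hr.2.2 v (Relation.TransGen.head hrvu h2)
      refine ⟨Sum.inl ⟨_, hτ⟩, ?_⟩
      apply Subtype.ext
      rw [hΦ]; simp only [Sum.elim_inl]; rw [dif_neg hP]
      exact hext_eq v u Sym2.eq_swap hadj.symm hrvu
  rw [← Nat.card_eq_of_bijective Φ ⟨hinj, hsurj⟩, Nat.card_sum]

end OrientRec4

section Stanley

private lemma stanley_noedge (V : Type) [Fintype V] [DecidableEq V] (G : SimpleGraph V)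
    (h : ¬ ∃ a b, G.Adj a b) :
    (whitney G).eval (-1 : ℤ) = (-1) ^ (Fintype.card V) * (acyclicOrientationCount G : ℤ) := by
  have hbot : G = ⊥ := eq_bot_of_no_adj h
  subst hbot
  rw [whitney_bot, aoc_bot]
  simp

private lemma stanley_aux : ∀ (m : ℕ) (V : Type) [Fintype V] [DecidableEq V]
    (G : SimpleGraph V), (edgeFS G).card ≤ m →
    (whitney G).eval (-1 : ℤ) = (-1) ^ (Fintype.card V) * (acyclicOrientationCount G : ℤ) := by
  intro m
  induction m with
  | zero =>
    intro V _ _ G hcard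
    refine stanley_noedge V G ?_
    rintro ⟨a, b, hab⟩
    have hm : s(a,b) ∈ edgeFS G := mem_edgeFS.2 (G.mem_edgeSet.2 hab)
    have := Finset.card_pos.2 ⟨_, hm⟩
    omega
  | succ m ih =>
    intro V _ _ G hcard
    by_cases hE : ∃ a b, G.Adj a b
    · obtain ⟨u, v, hadj⟩ := hE
      have hne := G.ne_of_adj hadj
      have hmem : s(u,v) ∈ edgeFS G := mem_edgeFS.2 (G.mem_edgeSet.2 hadj)
      have hpos : 1 ≤ (edgeFS G).card := Finset.card_pos.2 ⟨_, hmem⟩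
      have hd : (edgeFS (G.deleteEdges {s(u,v)})).card ≤ m := by
        rw [card_edgeFS_delete hadj]; omega
      have hc : (edgeFS (contractE (G.deleteEdges {s(u,v)}) u v gd_not_adj)).card ≤ m :=
        le_trans (card_edgeFS_contract hadj) hd
      have hVpos : 1 ≤ Fintype.card V := by
        have : Nonempty V := ⟨u⟩
        exact Fintype.card_pos
      have hcardsub : Fintype.card {w : V // w ≠ v} = Fintype.card V - 1 := by
        simp [Fintype.card_subtype_compl, Fintype.card_subtype_eq]
      have h1 := ih V (G.deleteEdges {s(u,v)}) hd
      have h2 := ih {w : V // w ≠ v} (contractE (G.deleteEdges {s(u,v)}) u v gd_not_adj) hc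
      have hrec := congrArg (Polynomial.eval (-1 : ℤ)) (whitney_rec hadj)
      rw [Polynomial.eval_add] at hrec
      have hWG : (whitney G).eval (-1 : ℤ)
          = (whitney (G.deleteEdges {s(u,v)})).eval (-1)
            - (whitney (contractE (G.deleteEdges {s(u,v)}) u v gd_not_adj)).eval (-1) := by
        linarith
      rw [hWG, h1, h2, hcardsub, aoc_rec hadj]
      have hn : Fintype.card V - 1 + 1 = Fintype.card V := Nat.succ_pred_eq_of_pos hVpos
      have hpow : (-1 : ℤ) ^ (Fintype.card V) = (-1) ^ (Fintype.card V - 1) * (-1) := by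
        rw [← pow_succ, hn]
      push_cast
      rw [hpow]
      ring
    · exact stanley_noedge V G hE

private lemma stanley (V : Type) [Fintype V] [DecidableEq V] (G : SimpleGraph V) :
    (whitney G).eval (-1 : ℤ) = (-1) ^ (Fintype.card V) * (acyclicOrientationCount G : ℤ) :=
  stanley_aux (edgeFS G).card V G le_rfl

end Stanley
section Flats
set_option maxHeartbeats 1600000

variable {V : Type}

private lemma reach_map {α β : Type} {H : SimpleGraph α} {K : SimpleGraph β} (g : α → β)
    (h : ∀ a b, H.Adj a b → K.Reachable (g a) (g b)) {x y : α} (hxy : H.Reachable x y) :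
    K.Reachable (g x) (g y) := by
  obtain ⟨w⟩ := hxy
  induction w with
  | nil => exact SimpleGraph.Reachable.refl _
  | cons h' _ ih => exact (h _ _ h').trans ih

private def monoG {β : Type} (G : SimpleGraph V) (f : V → β) : SimpleGraph V where
  Adj a b := G.Adj a b ∧ f a = f b
  symm := by constructor; rintro a b ⟨h1, h2⟩; exact ⟨h1.symm, h2.symm⟩
  loopless := ⟨fun a h => G.irrefl h.1⟩

private def closureG {β : Type} (G : SimpleGraph V) (f : V → β) : SimpleGraph V where
  Adj a b := G.Adj a b ∧ (monoG G f).Reachable a b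
  symm := by constructor; rintro a b ⟨h1, h2⟩; exact ⟨h1.symm, h2.symm⟩
  loopless := ⟨fun a h => G.irrefl h.1⟩

private lemma mono_reach_color {β : Type} {G : SimpleGraph V} {f : V → β} {a b : V}
    (h : (monoG G f).Reachable a b) : f a = f b := by
  obtain ⟨w⟩ := h
  induction w with
  | nil => rfl
  | cons h' _ ih => exact h'.2.trans ih

private lemma closure_reach_iff {β : Type} {G : SimpleGraph V} {f : V → β} {a b : V} :
    (closureG G f).Reachable a b ↔ (monoG G f).Reachable a b := by
  constructor
  · exact reachable_mono_aux (H := closureG G f) (K := monoG G f) (fun x y hxy => hxy.2)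
  · exact reachable_mono_aux (H := monoG G f) (K := closureG G f) (fun x y hxy =>
      SimpleGraph.Adj.reachable
        (⟨hxy.1, SimpleGraph.Adj.reachable hxy⟩ : (closureG G f).Adj x y))

private lemma closure_isFlat {β : Type} (G : SimpleGraph V) (f : V → β) :
    IsFlatOf G (closureG G f) := by
  constructor
  · intro a b hab
    exact hab.1
  · intro a b hG hreach
    exact ⟨hG, closure_reach_iff.1 hreach⟩

private lemma mono_walk_induce [DecidableEq V] {d : ℕ} {G : SimpleGraph V} {f : V → Fin d}
    {a b : V} (w : (monoG G f).Walk a b) :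
    ∀ (i : Fin d) (ha : a ∈ f ⁻¹' {i}) (hb : b ∈ f ⁻¹' {i}),
      (G.induce (f ⁻¹' {i})).Reachable ⟨a, ha⟩ ⟨b, hb⟩ := by
  induction w with
  | nil =>
    intro i ha hb
    rfl
  | @cons x y z h' p ih =>
    intro i ha hb
    have hy : y ∈ f ⁻¹' {i} := by
      have hfheq : f x = f y := h'.2
      have hfx : f x = i := ha
      simp only [Set.mem_preimage, Set.mem_singleton_iff, ← hfheq]
      exact hfx
    exact (SimpleGraph.Adj.reachable (by exact h'.1 :
      (G.induce (f ⁻¹' {i})).Adj ⟨x, ha⟩ ⟨y, hy⟩)).trans (ih i hy hb)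

private lemma exponent_eq [Fintype V] [DecidableEq V] (G : SimpleGraph V) {d : ℕ}
    (f : V → Fin d) :
    (∑ i : Fin d, inducedRank G (f ⁻¹' {i}))
      = Fintype.card V - Nat.card (monoG G f).ConnectedComponent := by
  classical
  have hle : ∀ i : Fin d,
      Nat.card (G.induce (f ⁻¹' {i})).ConnectedComponent ≤ Nat.card ↥(f ⁻¹' {i}) :=
    fun i => Nat.card_le_card_of_surjective _ (fun c => c.exists_rep)
  have hsizes : (∑ i : Fin d, Nat.card ↥(f ⁻¹' {i})) = Fintype.card V := by
    have h1 : ∀ i : Fin d, Nat.card ↥(f ⁻¹' {i})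
        = (Finset.univ.filter (fun v => f v = i)).card := by
      intro i
      rw [← nat_card_subtype_eq_filter (fun v => f v = i)]
      exact Nat.card_congr (Equiv.subtypeEquivRight (by intro x; simp))
    simp only [h1]
    rw [← Finset.card_univ (α := V), Finset.card_eq_sum_card_fiberwise
      (f := f) (t := (Finset.univ : Finset (Fin d))) (fun x _ => Finset.mem_univ _)]
  set color : (monoG G f).ConnectedComponent → Fin d :=
    Quot.lift f (fun a b hab => mono_reach_color hab) with hcolordef
  have key : ∀ i : Fin d,
      Nat.card (G.induce (f ⁻¹' {i})).ConnectedComponent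
        = Nat.card {c : (monoG G f).ConnectedComponent // color c = i} := by
    intro i
    have hadjmap : ∀ (a b : ↥(f ⁻¹' {i})), (G.induce (f ⁻¹' {i})).Adj a b →
        (monoG G f).Reachable a.1 b.1 := by
      intro a b hab
      have hG : G.Adj a.1 b.1 := hab
      have hfa : f a.1 = i := a.2
      have hfb : f b.1 = i := b.2
      exact SimpleGraph.Adj.reachable ⟨hG, hfa.trans hfb.symm⟩
    refine Nat.card_congr (Equiv.ofBijective
      (fun c => Quot.lift
        (fun (x : ↥(f ⁻¹' {i})) =>
          (⟨(monoG G f).connectedComponentMk x.1, x.2⟩ :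
            {c : (monoG G f).ConnectedComponent // color c = i}))
        (fun x y hxy => Subtype.ext (SimpleGraph.ConnectedComponent.sound
          (reach_map Subtype.val hadjmap hxy)))
        c) ⟨?_, ?_⟩)
    · intro c c'
      refine Quot.induction_on₂ c c' (fun x y h => ?_)
      have hreach : (monoG G f).Reachable x.1 y.1 :=
        SimpleGraph.ConnectedComponent.exact (congrArg Subtype.val h)
      obtain ⟨w⟩ := hreach
      have := mono_walk_induce w i x.2 y.2
      obtain ⟨w2⟩ := this
      exact Quot.sound ⟨w2⟩
    · rintro ⟨c, hc⟩
      obtain ⟨v, rfl⟩ := c.exists_rep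
      exact ⟨Quot.mk _ (⟨v, hc⟩ : ↥(f ⁻¹' {i})), Subtype.ext rfl⟩
  have hcomp : (∑ i : Fin d, Nat.card (G.induce (f ⁻¹' {i})).ConnectedComponent)
      = Nat.card (monoG G f).ConnectedComponent := by
    letI : Fintype (monoG G f).ConnectedComponent := Fintype.ofFinite _
    rw [Nat.card_eq_fintype_card (α := (monoG G f).ConnectedComponent), ← Finset.card_univ,
      Finset.card_eq_sum_card_fiberwise
        (f := color) (t := (Finset.univ : Finset (Fin d))) (fun x _ => Finset.mem_univ _)]
    refine Finset.sum_congr rfl (fun i _ => ?_)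
    rw [key i, nat_card_subtype_eq_filter (fun c => color c = i)]
  calc (∑ i : Fin d, inducedRank G (f ⁻¹' {i}))
      = (∑ i : Fin d, Nat.card ↥(f ⁻¹' {i}))
        - ∑ i : Fin d, Nat.card (G.induce (f ⁻¹' {i})).ConnectedComponent :=
        Finset.sum_tsub_distrib _ (fun i _ => hle i)
    _ = _ := by rw [hsizes, hcomp]

end Flats
section Flats2
set_option maxHeartbeats 1600000

variable {V : Type} [Fintype V] [DecidableEq V]

private noncomputable def flatFS (G : SimpleGraph V) : Finset (SimpleGraph V) :=
  Set.Finite.toFinset (Set.toFinite {H : SimpleGraph V | IsFlatOf G H})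

private lemma mem_flatFS {G H : SimpleGraph V} : H ∈ flatFS G ↔ IsFlatOf G H :=
  Set.Finite.mem_toFinset _

private lemma coe_flatFS (G : SimpleGraph V) :
    (↑(flatFS G) : Set (SimpleGraph V)) = {H : SimpleGraph V | IsFlatOf G H} :=
  Set.Finite.coe_toFinset _

private noncomputable def fiberEquiv (G : SimpleGraph V) {H : SimpleGraph V}
    (hH : IsFlatOf G H) (d : ℕ) :
    {f : V → Fin d // closureG G f = H}
      ≃ {g : H.ConnectedComponent → Fin d //
          ∀ C D, (contractFlat G H).Adj C D → g C ≠ g D} where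
  toFun fp :=
    ⟨Quot.lift fp.1 (fun a b hr => mono_reach_color (closure_reach_iff.1 (by
        rw [fp.2]; exact hr))), by
      rintro C D ⟨hne', a, b, hGab, rfl, rfl⟩ heq
      have hmono : (monoG G fp.1).Adj a b := ⟨hGab, heq⟩
      have hcl : (closureG G fp.1).Adj a b := ⟨hGab, SimpleGraph.Adj.reachable hmono⟩
      rw [fp.2] at hcl
      exact hne' (SimpleGraph.ConnectedComponent.sound hcl.reachable)⟩
  invFun gp :=
    ⟨fun v => gp.1 (H.connectedComponentMk v), by
      ext a b
      constructor
      · rintro ⟨hG, hmreach⟩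
        have hmle : ∀ x y,
            (monoG G (fun v => gp.1 (H.connectedComponentMk v))).Adj x y → H.Adj x y := by
          rintro x y ⟨hGxy, hfxy⟩
          by_cases hmk : H.connectedComponentMk x = H.connectedComponentMk y
          · exact hH.2 x y hGxy (SimpleGraph.ConnectedComponent.exact hmk)
          · exact absurd hfxy (gp.2 _ _ ⟨hmk, x, y, hGxy, rfl, rfl⟩)
        have hre : H.Reachable a b :=
          reachable_mono_aux (fun x y hxy => (hmle x y hxy).reachable) hmreach
        exact hH.2 a b hG hre
      · intro hab
        refine ⟨hH.1 hab, SimpleGraph.Adj.reachable ⟨hH.1 hab, ?_⟩⟩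
        exact congrArg gp.1 (SimpleGraph.ConnectedComponent.sound hab.reachable)⟩
  left_inv fp := Subtype.ext (funext (fun v => rfl))
  right_inv gp := by
    apply Subtype.ext
    funext C
    induction C using SimpleGraph.ConnectedComponent.ind
    rfl

private lemma fiber_card (G : SimpleGraph V) {H : SimpleGraph V} (hH : IsFlatOf G H) (d : ℕ) :
    Nat.card {f : V → Fin d // closureG G f = H} = properCount (contractFlat G H) d := by
  rw [properCount]
  exact Nat.card_congr (fiberEquiv G hH d)

private lemma chromQ_flat_decomp (G : SimpleGraph V) (d : ℕ) :
    chromQ G d = ∑ H ∈ flatFS G,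
      (properCount (contractFlat G H) d : Polynomial ℤ) * X ^ flatRank H := by
  classical
  rw [chromQ]
  have hmaps : ∀ f : V → Fin d, closureG G f ∈ flatFS G :=
    fun f => mem_flatFS.2 (closure_isFlat G f)
  rw [← Finset.sum_fiberwise_of_maps_to (g := fun f : V → Fin d => closureG G f)
    (fun f _ => hmaps f) (fun f => (X : Polynomial ℤ) ^ (∑ i : Fin d, inducedRank G (f ⁻¹' {i})))]
  refine Finset.sum_congr rfl (fun H hHmem => ?_)
  have hflat : IsFlatOf G H := mem_flatFS.1 hHmem
  have hfix : ∀ f ∈ Finset.univ.filter (fun f : V → Fin d => closureG G f = H),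
      (X : Polynomial ℤ) ^ (∑ i : Fin d, inducedRank G (f ⁻¹' {i})) = X ^ flatRank H := by
    intro f hf
    rw [Finset.mem_filter] at hf
    have hreq : ∀ a b, (monoG G f).Reachable a b ↔ H.Reachable a b := by
      intro a b
      rw [← hf.2]
      exact closure_reach_iff.symm
    rw [exponent_eq G f, flatRank, ncc_congr hreq]
  rw [Finset.sum_congr rfl hfix, Finset.sum_const, nsmul_eq_mul]
  congr 1
  rw [← fiber_card G hflat d, nat_card_subtype_eq_filter (fun f : V → Fin d => closureG G f = H)]

end Flats2
set_option maxHeartbeats 1600000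

/-- `(-1)^|V| χ_{-q}(Γ,-1) = ∑_{F flat} a(Γ/F) q^{rk F}`. -/
theorem chromQ_specialization_eq_sum_flats
    {V : Type} [Fintype V] [DecidableEq V] (n : ℕ)
    (G : SimpleGraph V) (hV : Fintype.card V = n)
    (P : Polynomial (Polynomial ℤ))
    (hP : ∀ d : ℕ, P.eval ((d : ℕ) : Polynomial ℤ) = chromQ G d) :
    (-1 : Polynomial ℤ) ^ n * (P.eval (-1 : Polynomial ℤ)).comp (-X)
      = ∑ᶠ H ∈ {H : SimpleGraph V | IsFlatOf G H},
          (acyclicOrientationCount (contractFlat G H) : Polynomial ℤ) * X ^ flatRank H := by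
  classical
  subst hV
  set Q : Polynomial (Polynomial ℤ) := ∑ H ∈ flatFS G,
    Polynomial.C ((X : Polynomial ℤ) ^ flatRank H) *
      (@whitney H.ConnectedComponent (Fintype.ofFinite _) (contractFlat G H)).map
        (Polynomial.C : ℤ →+* Polynomial ℤ) with hQ
  have hQeval : ∀ d : ℕ, Q.eval ((d : ℕ) : Polynomial ℤ) = chromQ G d := by
    intro d
    rw [hQ, Polynomial.eval_finset_sum, chromQ_flat_decomp G d]
    refine Finset.sum_congr rfl (fun H hH => ?_)
    letI : Fintype H.ConnectedComponent := Fintype.ofFinite _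
    rw [Polynomial.eval_mul, Polynomial.eval_C]
    have hcast : ((d : ℕ) : Polynomial ℤ) = Polynomial.C ((d : ℕ) : ℤ) := by simp
    rw [hcast, Polynomial.eval_map, Polynomial.eval₂_hom, whitney_eval, map_natCast]
    ring
  have hPQ : P = Q := poly_ext (fun d => (hP d).trans (hQeval d).symm)
  have hQeval2 : Q.eval (-1 : Polynomial ℤ)
      = ∑ H ∈ flatFS G, (X : Polynomial ℤ) ^ flatRank H *
          Polynomial.C ((-1 : ℤ) ^ (Nat.card H.ConnectedComponent)
            * (acyclicOrientationCount (contractFlat G H) : ℤ)) := by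
    rw [hQ, Polynomial.eval_finset_sum]
    refine Finset.sum_congr rfl (fun H hH => ?_)
    letI : Fintype H.ConnectedComponent := Fintype.ofFinite _
    letI : DecidableEq H.ConnectedComponent := Classical.decEq _
    rw [Polynomial.eval_mul, Polynomial.eval_C]
    have hneg : (-1 : Polynomial ℤ) = Polynomial.C (-1 : ℤ) := by simp
    rw [hneg, Polynomial.eval_map, Polynomial.eval₂_hom, stanley _ _, Nat.card_eq_fintype_card]
  rw [hPQ, hQeval2]
  rw [show {H : SimpleGraph V | IsFlatOf G H} = (↑(flatFS G) : Set (SimpleGraph V)) from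
    (coe_flatFS G).symm, finsum_mem_coe_finset]
  have hcompsum : ((∑ H ∈ flatFS G, (X : Polynomial ℤ) ^ flatRank H *
      Polynomial.C ((-1 : ℤ) ^ (Nat.card H.ConnectedComponent)
        * (acyclicOrientationCount (contractFlat G H) : ℤ))).comp (-X))
      = ∑ H ∈ flatFS G, (-X : Polynomial ℤ) ^ flatRank H *
          Polynomial.C ((-1 : ℤ) ^ (Nat.card H.ConnectedComponent)
            * (acyclicOrientationCount (contractFlat G H) : ℤ)) := by
    simp [Polynomial.eval₂_finset_sum, Polynomial.comp, Polynomial.eval₂_mul,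
      Polynomial.eval₂_pow, Polynomial.eval₂_neg, Polynomial.eval₂_one,
      Polynomial.eval₂_natCast, Polynomial.eval₂_C, Polynomial.eval₂_X]
  rw [hcompsum, Finset.mul_sum]
  refine Finset.sum_congr rfl (fun H hH => ?_)
  have hc_le : Nat.card H.ConnectedComponent ≤ Fintype.card V := by
    have h1 := Nat.card_le_card_of_surjective H.connectedComponentMk (fun c => c.exists_rep)
    simpa [Nat.card_eq_fintype_card] using h1
  have hsum : flatRank H + Nat.card H.ConnectedComponent = Fintype.card V := by
    rw [flatRank]
    omega
  have hsign : ((-1 : Polynomial ℤ) ^ Fintype.card V)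
      * ((-1 : Polynomial ℤ) ^ flatRank H
        * (-1 : Polynomial ℤ) ^ Nat.card H.ConnectedComponent) = 1 := by
    rw [← pow_add, ← pow_add, hsum]
    exact Even.neg_one_pow ⟨Fintype.card V, rfl⟩
  have hCmul : (Polynomial.C ((-1 : ℤ) ^ (Nat.card H.ConnectedComponent)
      * (acyclicOrientationCount (contractFlat G H) : ℤ)) : Polynomial ℤ)
      = (-1 : Polynomial ℤ) ^ Nat.card H.ConnectedComponent
        * (acyclicOrientationCount (contractFlat G H) : Polynomial ℤ) := by
    simp [map_mul, map_pow]
  have hnegX : (-X : Polynomial ℤ) ^ flatRank H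
      = (-1 : Polynomial ℤ) ^ flatRank H * X ^ flatRank H := by
    rw [neg_pow]
  rw [hCmul, hnegX]
  linear_combination ((acyclicOrientationCount (contractFlat G H) : Polynomial ℤ)
    * X ^ flatRank H) * hsign
end

section
/- For every finite simple graph Γ on vertex set V there exists a polynomial P in one variable t with coefficients in ℤ[q] such that for every natural number d, P evaluated at d equals χ_q(Γ,d) (i.e. the q-chromatic function d ↦ χ_q(Γ,d) is a polynomial function of d). -/
open Polynomial

section Aux
variable {V : Type} [Fintype V] [DecidableEq V]

lemma inducedRank_empty (G : SimpleGraph V) : inducedRank G (∅ : Set V) = 0 := by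
  have h1 : IsEmpty ((∅ : Set V) : Type) := by simp
  have h2 : IsEmpty (G.induce (∅ : Set V)).ConnectedComponent :=
    ⟨fun c => SimpleGraph.ConnectedComponent.ind (fun v => isEmptyElim v) c⟩
  simp [inducedRank, Nat.card_of_isEmpty]

/-- the fiber of `f` through `v`, as a Finset. -/
def fiberOf {d : ℕ} (f : V → Fin d) (v : V) : Finset V :=
  Finset.univ.filter (fun u => f u = f v)

/-- the partition of `V` into fibers of `f`. -/
def fibersF {d : ℕ} (f : V → Fin d) : Finset (Finset V) :=
  Finset.univ.image (fiberOf f)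

lemma sum_inducedRank_eq (G : SimpleGraph V) {d : ℕ} (f : V → Fin d) :
    (∑ i : Fin d, inducedRank G (f ⁻¹' {i})) = ∑ s ∈ fibersF f, inducedRank G ↑s := by
  have hfib : fibersF f
      = (Finset.univ.image f).image (fun i => Finset.univ.filter (fun u => f u = i)) := by
    rw [Finset.image_image]; rfl
  have hinj : ∀ i ∈ Finset.univ.image f, ∀ j ∈ Finset.univ.image f,
      (Finset.univ.filter (fun u => f u = i)) = (Finset.univ.filter (fun u => f u = j)) → i = j := by
    intro i hi j hj hij
    obtain ⟨v, -, hv⟩ := Finset.mem_image.1 hi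
    have hv1 : v ∈ Finset.univ.filter (fun u => f u = i) := by simp [hv]
    rw [hij] at hv1
    have := (Finset.mem_filter.1 hv1).2
    rw [← hv, this]
  rw [hfib, Finset.sum_image hinj]
  have hcoe : ∀ i : Fin d, ((Finset.univ.filter (fun u => f u = i) : Finset V) : Set V)
      = f ⁻¹' {i} := by
    intro i; ext u; simp
  simp only [hcoe]
  refine (Finset.sum_subset (Finset.subset_univ _) ?_).symm
  intro i _ hi
  have : f ⁻¹' {i} = ∅ := by
    ext v; simp only [Set.mem_preimage, Set.mem_singleton_iff, Set.mem_empty_iff_false, iff_false]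
    intro hv; exact hi (Finset.mem_image.2 ⟨v, Finset.mem_univ v, hv⟩)
  rw [this, inducedRank_empty]

lemma isPart_fibersF {d : ℕ} (f : V → Fin d) :
    (∀ s ∈ fibersF f, s.Nonempty) ∧ (∀ v : V, ∃! s, s ∈ fibersF f ∧ v ∈ s) := by
  constructor
  · intro s hs
    obtain ⟨v, -, hv⟩ := Finset.mem_image.1 hs
    exact ⟨v, hv ▸ (by simp [fiberOf])⟩
  · intro v
    refine ⟨fiberOf f v, ⟨Finset.mem_image.2 ⟨v, Finset.mem_univ v, rfl⟩, by simp [fiberOf]⟩, ?_⟩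
    rintro s ⟨hs, hvs⟩
    obtain ⟨u, -, hu⟩ := Finset.mem_image.1 hs
    subst hu
    have hfu : f v = f u := (Finset.mem_filter.1 hvs).2
    unfold fiberOf
    ext w; simp [hfu]

lemma card_part {d : ℕ} (p : Finset (Finset V)) (hne : ∀ s ∈ p, s.Nonempty)
    (hex : ∀ v : V, ∃! s, s ∈ p ∧ v ∈ s) :
    (Finset.univ.filter (fun f : V → Fin d => fibersF f = p)).card
      = d.descFactorial p.card := by
  classical
  have hrep : ∀ s : {s // s ∈ p}, ∃ v, v ∈ s.1 := fun s => hne s.1 s.2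
  choose rep hrepm using hrep
  have hblk : ∀ v : V, ∃ s, s ∈ p ∧ v ∈ s := fun v => (hex v).exists
  choose blk hblkp hblkm using hblk
  have hblk_unique : ∀ (v : V) (s : Finset V), s ∈ p → v ∈ s → s = blk v := by
    intro v s hs hv
    exact (hex v).unique ⟨hs, hv⟩ ⟨hblkp v, hblkm v⟩
  -- key: for f with fibersF f = p, fibers through a block element are the block
  have key : ∀ (f : V → Fin d), fibersF f = p → ∀ s ∈ p, ∀ v ∈ s, fiberOf f v = s := by
    intro f hf s hs v hv
    rw [← hf] at hs
    obtain ⟨u, -, hu⟩ := Finset.mem_image.1 hs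
    subst hu
    have hfv : f v = f u := (Finset.mem_filter.1 hv).2
    unfold fiberOf; ext w; simp [hfv]
  -- the equivalence
  let F : {f : V → Fin d // fibersF f = p} → ({s // s ∈ p} ↪ Fin d) := fun ⟨f, hf⟩ =>
    ⟨fun s => f (rep s), by
      intro s t hst
      have h1 : fiberOf f (rep s) = s.1 := key f hf s.1 s.2 (rep s) (hrepm s)
      have h2 : fiberOf f (rep t) = t.1 := key f hf t.1 t.2 (rep t) (hrepm t)
      have : fiberOf f (rep s) = fiberOf f (rep t) := by
        unfold fiberOf; ext w; simp [hst]
      exact Subtype.ext (by rw [← h1, ← h2, this])⟩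
  let Gm : ({s // s ∈ p} ↪ Fin d) → {f : V → Fin d // fibersF f = p} := fun φ =>
    ⟨fun v => φ ⟨blk v, hblkp v⟩, by
      have hfib : ∀ v : V, fiberOf (fun v => φ ⟨blk v, hblkp v⟩) v = blk v := by
        intro v
        ext u
        simp only [fiberOf, Finset.mem_filter, Finset.mem_univ, true_and]
        constructor
        · intro h
          have : (⟨blk u, hblkp u⟩ : {s // s ∈ p}) = ⟨blk v, hblkp v⟩ := φ.injective h
          have hb : blk u = blk v := congrArg Subtype.val this
          exact hb ▸ hblkm u
        · intro hu
          have : blk v = blk u := hblk_unique u (blk v) (hblkp v) hu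
          exact congrArg φ (Subtype.ext this.symm)
      ext s
      simp only [fibersF, Finset.mem_image, Finset.mem_univ, true_and]
      constructor
      · rintro ⟨v, rfl⟩; rw [hfib]; exact hblkp v
      · intro hs
        obtain ⟨v, hv⟩ := hne s hs
        exact ⟨v, by rw [hfib]; exact (hblk_unique v s hs hv).symm⟩⟩
  have hFG : Function.LeftInverse Gm F := by
    rintro ⟨f, hf⟩
    apply Subtype.ext
    funext v
    show f (rep ⟨blk v, hblkp v⟩) = f v
    have h1 : fiberOf f v = blk v := key f hf (blk v) (hblkp v) v (hblkm v)
    have h2 : rep ⟨blk v, hblkp v⟩ ∈ fiberOf f v := by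
      rw [h1]; exact hrepm ⟨blk v, hblkp v⟩
    exact (Finset.mem_filter.1 h2).2
  have hGF : Function.RightInverse Gm F := by
    intro φ
    apply DFunLike.ext
    intro s
    show φ ⟨blk (rep s), hblkp (rep s)⟩ = φ s
    congr 1
    exact Subtype.ext (hblk_unique (rep s) s.1 s.2 (hrepm s)).symm
  have hcard : Fintype.card {f : V → Fin d // fibersF f = p}
      = Fintype.card ({s // s ∈ p} ↪ Fin d) :=
    Fintype.card_congr ⟨F, Gm, hFG, hGF⟩
  rw [← Fintype.card_subtype, hcard, Fintype.card_embedding_eq, Fintype.card_fin,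
    Fintype.card_coe]

end Aux


/-- The `q`-chromatic function `d ↦ χ_q(Γ,d)` is a polynomial function of `d`. -/
theorem chromQ_isPolynomial
    {V : Type} [Fintype V] [DecidableEq V] (G : SimpleGraph V) :
    ∃ P : Polynomial (Polynomial ℤ),
      ∀ d : ℕ, P.eval ((d : ℕ) : Polynomial ℤ) = chromQ G d := by
  classical
  refine ⟨∑ p : Finset (Finset V),
      if (∀ s ∈ p, s.Nonempty) ∧ (∀ v : V, ∃! s, s ∈ p ∧ v ∈ s) then
        C ((X : Polynomial ℤ) ^ (∑ s ∈ p, inducedRank G (s : Set V))) *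
          descPochhammer (Polynomial ℤ) p.card else 0, ?_⟩
  intro d
  rw [Polynomial.eval_finset_sum]
  have hL : ∀ p : Finset (Finset V),
      (if (∀ s ∈ p, s.Nonempty) ∧ (∀ v : V, ∃! s, s ∈ p ∧ v ∈ s) then
        C ((X : Polynomial ℤ) ^ (∑ s ∈ p, inducedRank G (s : Set V))) *
          descPochhammer (Polynomial ℤ) p.card else 0).eval ((d : ℕ) : Polynomial ℤ)
      = ((Finset.univ.filter (fun f : V → Fin d => fibersF f = p)).card : Polynomial ℤ) *
          (X : Polynomial ℤ) ^ (∑ s ∈ p, inducedRank G (s : Set V)) := by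
    intro p
    by_cases hp : (∀ s ∈ p, s.Nonempty) ∧ (∀ v : V, ∃! s, s ∈ p ∧ v ∈ s)
    · rw [if_pos hp, eval_mul, eval_C, descPochhammer_eval_eq_descFactorial,
        card_part p hp.1 hp.2]
      ring
    · rw [if_neg hp, eval_zero]
      have hemp : (Finset.univ.filter (fun f : V → Fin d => fibersF f = p)) = ∅ := by
        rw [Finset.filter_eq_empty_iff]
        intro f _ hf
        rw [← hf] at hp
        exact hp (isPart_fibersF f)
      rw [hemp]; simp
  rw [Finset.sum_congr rfl (fun p _ => hL p)]
  rw [chromQ]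
  simp only [sum_inducedRank_eq G]
  have hgr := Finset.sum_fiberwise' (Finset.univ : Finset (V → Fin d)) fibersF
      (fun p => (X : Polynomial ℤ) ^ (∑ s ∈ p, inducedRank G (s : Set V)))
  rw [← hgr]
  refine Finset.sum_congr rfl ?_
  intro p _
  rw [Finset.sum_const, nsmul_eq_mul]
end

section
/- Let Γ be a connected finite simple graph on vertex set V. Then the number of vertices (0-dimensional faces, equivalently extreme points) of the graphical zonotope Z_Γ equals a(Γ), the number of acyclic orientations of Γ. -/
open Polynomial

namespace GZAux

open Finset
open scoped Classical
set_option linter.unusedSectionVars false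

variable {V : Type} [Fintype V] [DecidableEq V]

/-- coefficient function of an orientation -/
noncomputable def ocoef (r : V → V → Prop) : V → V → ℝ :=
  fun u v => if r u v then 1 else if r v u then -1 else 0

/-- the vertex of the zonotope associated to an orientation -/
noncomputable def opoint (r : V → V → Prop) : V → ℝ :=
  fun w => ∑ u, ocoef r w u

/-- value of the linear functional with coefficients ℓ -/
def lval (ℓ : V → ℝ) (x : V → ℝ) : ℝ := ∑ v, ℓ v * x v

noncomputable def lmapCLM (ℓ : V → ℝ) : (V → ℝ) →L[ℝ] ℝ :=
  LinearMap.toContinuousLinearMap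
    { toFun := fun x => ∑ v, ℓ v * x v
      map_add' := by intro x y; simp [mul_add, Finset.sum_add_distrib]
      map_smul' := by intro c x; simp [Finset.mul_sum]; ring_nf; simp [mul_comm, mul_left_comm]
      }

lemma lmapCLM_apply (ℓ : V → ℝ) (x : V → ℝ) : lmapCLM ℓ x = lval ℓ x := rfl

lemma clm_eq_lval (l : (V → ℝ) →L[ℝ] ℝ) (x : V → ℝ) :
    l x = lval (fun v => l (Pi.single v 1)) x := by
  have hx : x = ∑ v, x v • (Pi.single v (1:ℝ) : V → ℝ) := by
    funext w
    simp [Finset.sum_apply, Pi.single_apply]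
  conv_lhs => rw [hx]
  rw [map_sum]
  simp [lval, mul_comm]

end GZAux

namespace GZAux
open Finset
open scoped Classical
set_option linter.unusedSectionVars false

variable {V : Type} [Fintype V] [DecidableEq V] {G : SimpleGraph V}

section Score

variable {ℓ : V → ℝ} {r : V → V → Prop}

lemma two_lval (c : V → V → ℝ) (hanti : ∀ u v, c u v = - c v u) (ℓ : V → ℝ) :
    2 * lval ℓ (fun w => ∑ u, c w u) = ∑ w, ∑ u, (ℓ w - ℓ u) * c w u := by
  have h1 : lval ℓ (fun w => ∑ u, c w u) = ∑ w, ∑ u, ℓ w * c w u := by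
    simp [lval, Finset.mul_sum]
  have h2 : ∑ w, ∑ u, ℓ u * c w u = - ∑ w, ∑ u, ℓ w * c w u := by
    have e1 : ∀ w u, ℓ w * c u w = -(ℓ w * c w u) := by
      intro w u; rw [hanti u w]; ring
    calc ∑ w, ∑ u, ℓ u * c w u = ∑ u, ∑ w, ℓ u * c w u := Finset.sum_comm
      _ = ∑ w, ∑ u, -(ℓ w * c w u) := by
          refine Finset.sum_congr rfl fun w _ => Finset.sum_congr rfl fun u _ => e1 w u
      _ = - ∑ w, ∑ u, ℓ w * c w u := by
          simp [Finset.sum_neg_distrib]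
  have h3 : ∑ w, ∑ u, (ℓ w - ℓ u) * c w u
      = (∑ w, ∑ u, ℓ w * c w u) - (∑ w, ∑ u, ℓ u * c w u) := by
    simp_rw [sub_mul, Finset.sum_sub_distrib]
  rw [h1, h3, h2]; ring

lemma term_le (c : V → V → ℝ) (hsupp : ∀ u v, ¬ G.Adj u v → c u v = 0)
    (hbdd : ∀ u v, |c u v| ≤ 1) (ℓ : V → ℝ) (w u : V) :
    (ℓ w - ℓ u) * c w u ≤ (if G.Adj w u then |ℓ w - ℓ u| else 0) := by
  by_cases h : G.Adj w u
  · simp only [h, if_true]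
    calc (ℓ w - ℓ u) * c w u ≤ |(ℓ w - ℓ u) * c w u| := le_abs_self _
      _ = |ℓ w - ℓ u| * |c w u| := abs_mul _ _
      _ ≤ |ℓ w - ℓ u| * 1 := mul_le_mul_of_nonneg_left (hbdd w u) (abs_nonneg _)
      _ = _ := mul_one _
  · simp [h, hsupp w u h]

variable (hgen : ∀ u v, G.Adj u v → ℓ u ≠ ℓ v)
    (hr : ∀ u v, r u v ↔ G.Adj u v ∧ ℓ v < ℓ u)

include hgen hr

lemma ocoef_anti : ∀ u v, ocoef r u v = - ocoef r v u := by
  intro u v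
  by_cases h : G.Adj u v
  · rcases lt_or_gt_of_ne (hgen u v h) with hlt | hlt
    · have h1 : r v u := (hr v u).mpr ⟨h.symm, hlt⟩
      have h2 : ¬ r u v := fun hc => absurd ((hr u v).mp hc).2 (not_lt.mpr hlt.le)
      simp [ocoef, h1, h2]
    · have h1 : r u v := (hr u v).mpr ⟨h, hlt⟩
      have h2 : ¬ r v u := fun hc => absurd ((hr v u).mp hc).2 (not_lt.mpr hlt.le)
      simp [ocoef, h1, h2]
  · have h1 : ¬ r u v := fun hc => h ((hr u v).mp hc).1
    have h2 : ¬ r v u := fun hc => h (((hr v u).mp hc).1).symm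
    simp [ocoef, h1, h2]

lemma ocoef_supp : ∀ u v, ¬ G.Adj u v → ocoef r u v = 0 := by
  intro u v h
  have h1 : ¬ r u v := fun hc => h ((hr u v).mp hc).1
  have h2 : ¬ r v u := fun hc => h (((hr v u).mp hc).1).symm
  simp [ocoef, h1, h2]

lemma ocoef_bdd : ∀ u v, |ocoef r u v| ≤ 1 := by
  intro u v; unfold ocoef; split_ifs <;> simp

lemma opoint_mem : opoint r ∈ graphicalZonotope G :=
  ⟨ocoef r, ocoef_anti hgen hr, ocoef_supp hgen hr, ocoef_bdd hgen hr, rfl⟩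

lemma term_ocoef (w u : V) :
    (ℓ w - ℓ u) * ocoef r w u = (if G.Adj w u then |ℓ w - ℓ u| else 0) := by
  by_cases h : G.Adj w u
  · simp only [h, if_true]
    rcases lt_or_gt_of_ne (hgen w u h) with hlt | hlt
    · have h1 : r u w := (hr u w).mpr ⟨h.symm, hlt⟩
      have h2 : ¬ r w u := fun hc => absurd ((hr w u).mp hc).2 (not_lt.mpr hlt.le)
      rw [abs_of_neg (sub_neg.mpr hlt)]
      simp [ocoef, h1, h2]
    · have h1 : r w u := (hr w u).mpr ⟨h, hlt⟩
      rw [abs_of_pos (sub_pos.mpr hlt)]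
      simp [ocoef, h1]
  · simp [h, ocoef_supp hgen hr w u h]

lemma lval_le_opoint : ∀ y ∈ graphicalZonotope G, lval ℓ y ≤ lval ℓ (opoint r) := by
  rintro y ⟨c, hanti, hsupp, hbdd, rfl⟩
  have h1 := two_lval c hanti ℓ
  have h2 := two_lval (ocoef r) (ocoef_anti hgen hr) ℓ
  have h3 : ∑ w, ∑ u, (ℓ w - ℓ u) * c w u ≤ ∑ w, ∑ u, (ℓ w - ℓ u) * ocoef r w u := by
    refine Finset.sum_le_sum fun w _ => Finset.sum_le_sum fun u _ => ?_
    rw [term_ocoef hgen hr]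
    exact term_le c hsupp hbdd ℓ w u
  have : opoint r = fun w => ∑ u, ocoef r w u := rfl
  rw [this] at *
  linarith

lemma eq_opoint_of_max : ∀ x ∈ graphicalZonotope G,
    (∀ y ∈ graphicalZonotope G, lval ℓ y ≤ lval ℓ x) → x = opoint r := by
  rintro x ⟨c, hanti, hsupp, hbdd, rfl⟩ hmax
  have hle := lval_le_opoint hgen hr _ ⟨c, hanti, hsupp, hbdd, rfl⟩
  have hge := hmax (opoint r) (opoint_mem hgen hr)
  have heq : lval ℓ (fun w => ∑ u, c w u) = lval ℓ (opoint r) := le_antisymm hle hge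
  have h1 := two_lval c hanti ℓ
  have h2 := two_lval (ocoef r) (ocoef_anti hgen hr) ℓ
  have hop : opoint r = fun w => ∑ u, ocoef r w u := rfl
  rw [hop] at heq
  have hsum : ∑ p ∈ Finset.univ ×ˢ Finset.univ, (ℓ p.1 - ℓ p.2) * c p.1 p.2
      = ∑ p ∈ Finset.univ ×ˢ Finset.univ, (ℓ p.1 - ℓ p.2) * ocoef r p.1 p.2 := by
    rw [Finset.sum_product, Finset.sum_product]
    linarith
  have hterm : ∀ p ∈ Finset.univ ×ˢ Finset.univ,
      (ℓ p.1 - ℓ p.2) * c p.1 p.2 = (ℓ p.1 - ℓ p.2) * ocoef r p.1 p.2 := by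
    refine (Finset.sum_eq_sum_iff_of_le fun p _ => ?_).mp hsum
    rw [term_ocoef hgen hr]
    exact term_le c hsupp hbdd ℓ p.1 p.2
  have hc : ∀ w u, c w u = ocoef r w u := by
    intro w u
    by_cases h : G.Adj w u
    · have hne : ℓ w - ℓ u ≠ 0 := sub_ne_zero.mpr (hgen w u h)
      exact mul_left_cancel₀ hne (hterm (w, u) (Finset.mem_product.mpr ⟨Finset.mem_univ _, Finset.mem_univ _⟩))
    · rw [hsupp w u h, ocoef_supp hgen hr w u h]
  funext w
  exact Finset.sum_congr rfl fun u _ => hc w u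

lemma exposed_set_eq :
    {x | x ∈ graphicalZonotope G ∧ ∀ y ∈ graphicalZonotope G, lval ℓ y ≤ lval ℓ x}
      = {opoint r} := by
  ext x
  simp only [Set.mem_setOf_eq, Set.mem_singleton_iff]
  constructor
  · rintro ⟨hx, hmax⟩
    exact eq_opoint_of_max hgen hr x hx hmax
  · rintro rfl
    exact ⟨opoint_mem hgen hr, lval_le_opoint hgen hr⟩

end Score
end GZAux

namespace GZAux
open Finset
open scoped Classical
set_option linter.unusedSectionVars false

variable {V : Type} [Fintype V] [DecidableEq V] {G : SimpleGraph V}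

lemma transGen_lt {ℓ : V → ℝ} {r : V → V → Prop} (hdec : ∀ u v, r u v → ℓ v < ℓ u) :
    ∀ a b, Relation.TransGen r a b → ℓ b < ℓ a := by
  intro a b h
  induction h with
  | single h => exact hdec _ _ h
  | tail _ h ih => exact lt_trans (hdec _ _ h) ih

lemma acyclic_of_potential {ℓ : V → ℝ} {r : V → V → Prop}
    (hdec : ∀ u v, r u v → ℓ v < ℓ u) : ∀ v, ¬ Relation.TransGen r v v :=
  fun v hv => lt_irrefl _ (transGen_lt hdec v v hv)

/-- topological potential of an acyclic relation: number of strict descendants -/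
noncomputable def tpot (r : V → V → Prop) : V → ℝ :=
  fun v => ((Finset.univ.filter fun u => Relation.TransGen r v u).card : ℝ)

lemma tpot_lt {r : V → V → Prop} (hac : ∀ v, ¬ Relation.TransGen r v v)
    {v w : V} (h : r v w) : tpot r w < tpot r v := by
  have hsub : (Finset.univ.filter fun u => Relation.TransGen r w u)
      ⊆ Finset.univ.filter fun u => Relation.TransGen r v u := by
    intro u hu
    simp only [Finset.mem_filter, Finset.mem_univ, true_and] at hu ⊢
    exact Relation.TransGen.head h hu
  have hss : (Finset.univ.filter fun u => Relation.TransGen r w u)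
      ⊂ Finset.univ.filter fun u => Relation.TransGen r v u := by
    refine (Finset.ssubset_iff_of_subset hsub).mpr ⟨w, ?_, ?_⟩
    · simp only [Finset.mem_filter, Finset.mem_univ, true_and]
      exact Relation.TransGen.single h
    · simp only [Finset.mem_filter, Finset.mem_univ, true_and]
      exact hac w
  unfold tpot
  exact_mod_cast Finset.card_lt_card hss

section AO

variable {r : V → V → Prop}
  (hr1 : ∀ u v, r u v → G.Adj u v)
  (hr2 : ∀ u v, G.Adj u v → Xor' (r u v) (r v u))
  (hr3 : ∀ v, ¬ Relation.TransGen r v v)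

include hr1 hr2 hr3

lemma tpot_compat : ∀ u v, r u v ↔ G.Adj u v ∧ tpot r v < tpot r u := by
  intro u v
  constructor
  · intro h
    exact ⟨hr1 u v h, tpot_lt hr3 h⟩
  · rintro ⟨hadj, hlt⟩
    rcases hr2 u v hadj with ⟨h, -⟩ | ⟨h, -⟩
    · exact h
    · exact absurd (tpot_lt hr3 h) (not_lt.mpr hlt.le)

lemma tpot_gen : ∀ u v, G.Adj u v → tpot r u ≠ tpot r v := by
  intro u v hadj
  rcases hr2 u v hadj with ⟨h, -⟩ | ⟨h, -⟩
  · exact (tpot_lt hr3 h).ne'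
  · exact (tpot_lt hr3 h).ne

end AO

/-- build a cycle from a relation in which every reached vertex has a successor -/
lemma exists_transGen_cycle {s : V → V → Prop}
    (hstep : ∀ a b, s a b → ∃ c, s b c) {a b : V} (hab : s a b) :
    ∃ v, Relation.TransGen s v v := by
  let g : ℕ → {p : V × V // s p.1 p.2} := fun n =>
    Nat.rec ⟨(a, b), hab⟩
      (fun _ p => ⟨(p.1.2, Classical.choose (hstep _ _ p.2)),
        Classical.choose_spec (hstep _ _ p.2)⟩) n
  have hs : ∀ n, s ((g n).1.1) ((g (n+1)).1.1) := fun n => (g n).2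
  have htrans : ∀ m k, Relation.TransGen s ((g m).1.1) ((g (m + k + 1)).1.1) := by
    intro m k
    induction k with
    | zero => exact Relation.TransGen.single (hs m)
    | succ k ih => exact Relation.TransGen.tail ih (hs (m + k + 1))
  obtain ⟨m, n, hne, heq⟩ := Finite.exists_ne_map_eq_of_infinite (fun n => (g n).1.1)
  rcases hne.lt_or_gt with h | h
  · refine ⟨(g m).1.1, ?_⟩
    have := htrans m (n - m - 1)
    rwa [show m + (n - m - 1) + 1 = n by omega, ← heq] at this
  · refine ⟨(g n).1.1, ?_⟩
    have := htrans n (m - n - 1)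
    rwa [show n + (m - n - 1) + 1 = m by omega, heq] at this

end GZAux

namespace GZAux
open Finset
open scoped Classical
set_option linter.unusedSectionVars false

variable {V : Type} [Fintype V] [DecidableEq V] {G : SimpleGraph V}

lemma opoint_injective {r r' : V → V → Prop}
    (hr1 : ∀ u v, r u v → G.Adj u v) (hr2 : ∀ u v, G.Adj u v → Xor' (r u v) (r v u))
    (hr3 : ∀ v, ¬ Relation.TransGen r v v)
    (hs1 : ∀ u v, r' u v → G.Adj u v) (hs2 : ∀ u v, G.Adj u v → Xor' (r' u v) (r' v u))
    (hx : opoint r = opoint r') : r = r' := by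
  set s : V → V → Prop := fun u v => r u v ∧ r' v u with hs
  -- pointwise identity between coefficient difference and s-indicators
  have key : ∀ w u, ocoef r w u - ocoef r' w u
      = 2 * ((if s w u then (1:ℝ) else 0) - (if s u w then 1 else 0)) := by
    intro w u
    by_cases hadj : G.Adj w u
    · rcases hr2 w u hadj with ⟨ha1, ha2⟩ | ⟨ha1, ha2⟩ <;>
        rcases hs2 w u hadj with ⟨hb1, hb2⟩ | ⟨hb1, hb2⟩ <;>
        · have hnr : ¬ r u w ∨ True := Or.inr trivial
          simp only [hs, ocoef]
          split_ifs <;> norm_num <;> tauto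
    · have h1 : ¬ r w u := fun hc => hadj (hr1 w u hc)
      have h2 : ¬ r u w := fun hc => hadj (hr1 u w hc).symm
      have h3 : ¬ r' w u := fun hc => hadj (hs1 w u hc)
      have h4 : ¬ r' u w := fun hc => hadj (hs1 u w hc).symm
      simp [hs, ocoef, h1, h2, h3, h4]
  -- balanced degrees
  have hbal : ∀ w, (∑ u, if s w u then (1:ℝ) else 0) = ∑ u, if s u w then (1:ℝ) else 0 := by
    intro w
    have h0 : ∑ u, (ocoef r w u - ocoef r' w u) = 0 := by
      have := congrFun hx w
      simp only [opoint] at this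
      rw [Finset.sum_sub_distrib, this, sub_self]
    rw [Finset.sum_congr rfl fun u _ => key w u] at h0
    rw [← Finset.mul_sum] at h0
    have := (mul_eq_zero.mp h0).resolve_left (by norm_num)
    rw [Finset.sum_sub_distrib] at this
    linarith
  -- step property
  have hstep : ∀ a b, s a b → ∃ c, s b c := by
    intro a b hab
    by_contra hcon
    push_neg at hcon
    have hout : (∑ u, if s b u then (1:ℝ) else 0) = 0 := by
      refine Finset.sum_eq_zero fun u _ => ?_
      simp [hcon u]
    have hin : (1:ℝ) ≤ ∑ u, if s u b then (1:ℝ) else 0 := by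
      have h1 := Finset.single_le_sum (f := fun u => if s u b then (1:ℝ) else 0)
        (fun u _ => by positivity) (Finset.mem_univ a)
      rwa [if_pos hab] at h1
    rw [← hbal b, hout] at hin
    linarith
  -- if r ≠ r', find an s-edge and derive a cycle in r
  by_contra hne
  have hedge : ∃ a b, s a b := by
    have hiff : ¬ ∀ u v, (r u v ↔ r' u v) := fun h =>
      hne (funext fun u => funext fun v => propext (h u v))
    obtain ⟨u, hu⟩ := not_forall.mp hiff
    obtain ⟨v, hv⟩ := not_forall.mp hu
    by_cases hruv : r u v
    · have hnr' : ¬ r' u v := fun hc => hv ⟨fun _ => hc, fun _ => hruv⟩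
      have hadj := hr1 u v hruv
      rcases hs2 u v hadj with ⟨h1, -⟩ | ⟨h1, -⟩
      · exact absurd h1 hnr'
      · exact ⟨u, v, hruv, h1⟩
    · have hr'uv : r' u v := by
        by_contra hc
        exact hv ⟨fun h => absurd h hruv, fun h => absurd h hc⟩
      have hadj := hs1 u v hr'uv
      rcases hr2 u v hadj with ⟨h1, -⟩ | ⟨h1, -⟩
      · exact absurd h1 hruv
      · exact ⟨v, u, h1, hr'uv⟩
  obtain ⟨a, b, hab⟩ := hedge
  obtain ⟨v, hv⟩ := exists_transGen_cycle hstep hab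
  exact hr3 v (Relation.TransGen.mono (fun x y h => h.1) v v hv)

end GZAux

namespace GZAux
open Finset
open scoped Classical
set_option linter.unusedSectionVars false

variable {V : Type} [Fintype V] [DecidableEq V] {G : SimpleGraph V}

/-- modify an antisymmetric coefficient function on the pair (u,v) -/
noncomputable def flip (c : V → V → ℝ) (u v : V) (s : ℝ) : V → V → ℝ :=
  fun a b => if a = u ∧ b = v then s else if a = v ∧ b = u then -s else c a b

section Flip

variable {c : V → V → ℝ} {u v : V} {s : ℝ}
  (hanti : ∀ a b, c a b = - c b a) (hne : u ≠ v)

include hanti hne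

lemma flip_eq (a b : V) :
    flip c u v s a b = c a b + (if a = u ∧ b = v then s - c u v else 0)
      + (if a = v ∧ b = u then -(s - c u v) else 0) := by
  simp only [flip]
  split_ifs with h1 h2 h2
  · exact absurd (h1.1.symm.trans h2.1) hne
  · rw [h1.1, h1.2]; ring
  · rw [h2.1, h2.2, hanti v u]; ring
  · ring

lemma flip_anti (a b : V) : flip c u v s a b = - flip c u v s b a := by
  rw [flip_eq hanti hne, flip_eq hanti hne, hanti a b]
  have huv : ¬ (u = v ∧ v = u) := fun h => hne h.1
  by_cases h1 : a = u ∧ b = v <;> by_cases h2 : a = v ∧ b = u <;>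
    simp [h1, h2, and_comm, huv] <;> ring

lemma flip_sum (w : V) :
    ∑ p, flip c u v s w p = (∑ p, c w p)
      + (if w = u then s - c u v else 0) + (if w = v then -(s - c u v) else 0) := by
  have h1 : ∑ p, flip c u v s w p
      = ∑ p, (c w p + (if w = u ∧ p = v then s - c u v else 0)
        + (if w = v ∧ p = u then -(s - c u v) else 0)) :=
    Finset.sum_congr rfl fun p _ => flip_eq hanti hne w p
  rw [h1, Finset.sum_add_distrib, Finset.sum_add_distrib]
  congr 1
  · congr 1
    by_cases hw : w = u <;> simp [hw]
  · by_cases hw : w = v <;> simp [hw]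

lemma flip_lval (ℓ : V → ℝ) :
    lval ℓ (fun w => ∑ p, flip c u v s w p)
      = lval ℓ (fun w => ∑ p, c w p) + (ℓ u - ℓ v) * (s - c u v) := by
  unfold lval
  have h1 : ∀ w, ∑ p, flip c u v s w p
      = (∑ p, c w p) + (if w = u then s - c u v else 0)
        + (if w = v then -(s - c u v) else 0) := fun w => flip_sum hanti hne w
  simp only [h1]
  simp only [mul_add, Finset.sum_add_distrib, mul_ite, mul_zero, mul_neg,
    Finset.sum_ite_eq' Finset.univ, Finset.mem_univ, if_true]
  ring

lemma flip_mem (hsupp : ∀ a b, ¬ G.Adj a b → c a b = 0) (hbdd : ∀ a b, |c a b| ≤ 1)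
    (hadj : G.Adj u v) (hs : |s| ≤ 1) :
    (fun w => ∑ p, flip c u v s w p) ∈ graphicalZonotope G := by
  refine ⟨flip c u v s, flip_anti hanti hne, ?_, ?_, rfl⟩
  · intro a b hab
    have h1 : ¬ (a = u ∧ b = v) := by rintro ⟨rfl, rfl⟩; exact hab hadj
    have h2 : ¬ (a = v ∧ b = u) := by rintro ⟨rfl, rfl⟩; exact hab hadj.symm
    simp [flip, h1, h2, hsupp a b hab]
  · intro a b
    unfold flip
    split_ifs
    · exact hs
    · rwa [abs_neg]
    · exact hbdd a b

end Flip
end GZAux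

namespace GZAux
open Finset
open scoped Classical
set_option linter.unusedSectionVars false

variable {V : Type} [Fintype V] [DecidableEq V] {G : SimpleGraph V}

lemma edge_coef {c : V → V → ℝ} {ℓ : V → ℝ}
    (hanti : ∀ a b, c a b = - c b a) (hsupp : ∀ a b, ¬ G.Adj a b → c a b = 0)
    (hbdd : ∀ a b, |c a b| ≤ 1)
    (hmax : ∀ y ∈ graphicalZonotope G, lval ℓ y ≤ lval ℓ (fun w => ∑ p, c w p))
    (huniq : ∀ y ∈ graphicalZonotope G,
      lval ℓ (fun w => ∑ p, c w p) ≤ lval ℓ y → y = fun w => ∑ p, c w p)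
    {u v : V} (hadj : G.Adj u v) :
    ℓ u ≠ ℓ v ∧ c u v = (if ℓ v < ℓ u then 1 else -1) := by
  have hne : u ≠ v := G.ne_of_adj hadj
  have habs : ∀ s : ℝ, |s| ≤ 1 →
      (ℓ u - ℓ v) * (s - c u v) ≤ 0 ∧
      ((ℓ u - ℓ v) * (s - c u v) = 0 → (fun w => ∑ p, flip c u v s w p) = fun w => ∑ p, c w p) := by
    intro s hs
    have hmem := flip_mem hanti hne hsupp hbdd hadj hs (s := s)
    have hval := flip_lval hanti hne (s := s) ℓ
    constructor
    · have := hmax _ hmem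
      linarith
    · intro h0
      refine huniq _ hmem ?_
      rw [hval, h0, add_zero]
  have hcuv := hbdd u v
  rw [abs_le] at hcuv
  rcases lt_trichotomy (ℓ u) (ℓ v) with hlt | heq | hlt
  · -- ℓ u < ℓ v : c u v = -1
    have h1 := (habs (-1) (by norm_num)).1
    have hc : c u v = -1 := by nlinarith
    refine ⟨hlt.ne, ?_⟩
    rw [if_neg (not_lt.mpr hlt.le), hc]
  · -- equal potentials: contradiction
    exfalso
    have h1 := (habs 1 (by norm_num)).2 (by rw [heq]; ring)
    have h2 := (habs (-1) (by norm_num)).2 (by rw [heq]; ring)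
    have e1 := congrFun h1 u
    have e2 := congrFun h2 u
    rw [flip_sum hanti hne u, if_pos rfl, if_neg hne] at e1 e2
    have : (1 : ℝ) - c u v = 0 := by linarith
    have : (-1 : ℝ) - c u v = 0 := by linarith
    linarith
  · -- ℓ v < ℓ u : c u v = 1
    have h1 := (habs 1 (by norm_num)).1
    have hc : c u v = 1 := by nlinarith
    exact ⟨hlt.ne', by rw [if_pos hlt, hc]⟩

lemma singleton_of_dim_zero {F : Set (V → ℝ)}
    (hd : Module.finrank ℝ (affineSpan ℝ F).direction = 0) :
    ∀ x ∈ F, ∀ y ∈ F, y = x := by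
  intro x hx y hy
  by_contra hne
  have hmem : y - x ∈ (affineSpan ℝ F).direction := by
    have := AffineSubspace.vsub_mem_direction (subset_affineSpan ℝ F hy)
      (subset_affineSpan ℝ F hx)
    simpa using this
  have hspan : Submodule.span ℝ {y - x} ≤ (affineSpan ℝ F).direction :=
    Submodule.span_le.mpr (Set.singleton_subset_iff.mpr hmem)
  have h1 : Module.finrank ℝ (Submodule.span ℝ {y - x}) = 1 :=
    finrank_span_singleton (sub_ne_zero.mpr hne)
  have h2 := Submodule.finrank_mono hspan
  rw [h1, hd] at h2
  omega

lemma exposed_of_ao {r : V → V → Prop}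
    (hr1 : ∀ u v, r u v → G.Adj u v) (hr2 : ∀ u v, G.Adj u v → Xor' (r u v) (r v u))
    (hr3 : ∀ v, ¬ Relation.TransGen r v v) :
    IsExposed ℝ (graphicalZonotope G) {opoint r} := by
  intro _
  refine ⟨lmapCLM (tpot r), ?_⟩
  have h := exposed_set_eq (tpot_gen hr1 hr2 hr3) (tpot_compat hr1 hr2 hr3)
  exact h.symm

end GZAux


/-- The number of vertices of the graphical zonotope equals the number of acyclic
orientations of the graph. -/
theorem faceCount_zero_eq_acyclicOrientationCount
    {V : Type} [Fintype V] [DecidableEq V] (G : SimpleGraph V) (hG : G.Connected) :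
    faceCount G 0 = acyclicOrientationCount G := by
  classical
  unfold faceCount acyclicOrientationCount
  refine (Nat.card_eq_of_bijective
    (fun rp => ⟨{GZAux.opoint rp.1}, Set.singleton_nonempty _,
      GZAux.exposed_of_ao rp.2.1 rp.2.2.1 rp.2.2.2,
      by rw [direction_affineSpan, vectorSpan_singleton]; exact finrank_bot ℝ _⟩)
    ⟨?_, ?_⟩).symm
  · -- injectivity
    rintro ⟨r, hr1, hr2, hr3⟩ ⟨r', hs1, hs2, hs3⟩ h
    have hset : ({GZAux.opoint r} : Set (V → ℝ)) = {GZAux.opoint r'} :=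
      congrArg Subtype.val h
    have heq := Set.singleton_eq_singleton_iff.mp hset
    exact Subtype.ext (GZAux.opoint_injective hr1 hr2 hr3 hs1 hs2 heq)
  · -- surjectivity
    rintro ⟨F, hne, hexp, hdim⟩
    obtain ⟨l, hl⟩ := hexp hne
    obtain ⟨x, hxF⟩ := hne
    set ℓ : V → ℝ := fun w => l (Pi.single w 1) with hℓ
    have hc : ∀ y, l y = GZAux.lval ℓ y := by
      intro y; rw [hℓ]; exact GZAux.clm_eq_lval l y
    have hlset : F = {z | z ∈ graphicalZonotope G ∧
        ∀ y ∈ graphicalZonotope G, GZAux.lval ℓ y ≤ GZAux.lval ℓ z} := by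
      rw [hl]; ext z
      simp only [Set.mem_sep_iff, Set.mem_setOf_eq, hc]
    have hxmem := hlset ▸ hxF
    obtain ⟨⟨c, hanti, hsupp, hbdd, hxeq⟩, hmax0⟩ := hxmem
    subst hxeq
    have hmax : ∀ y ∈ graphicalZonotope G,
        GZAux.lval ℓ y ≤ GZAux.lval ℓ (fun w => ∑ p, c w p) := hmax0
    have huniq : ∀ y ∈ graphicalZonotope G,
        GZAux.lval ℓ (fun w => ∑ p, c w p) ≤ GZAux.lval ℓ y → y = fun w => ∑ p, c w p := by
      intro y hy hle
      have hyF : y ∈ F := by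
        rw [hlset]; exact ⟨hy, fun z hz => le_trans (hmax z hz) hle⟩
      exact GZAux.singleton_of_dim_zero hdim _ hxF y hyF
    set r : V → V → Prop := fun a b => G.Adj a b ∧ ℓ b < ℓ a with hrdef
    have hgen : ∀ a b, G.Adj a b → ℓ a ≠ ℓ b := fun a b hab =>
      (GZAux.edge_coef hanti hsupp hbdd hmax huniq hab).1
    have hcompat : ∀ a b, r a b ↔ G.Adj a b ∧ ℓ b < ℓ a := fun _ _ => Iff.rfl
    have hr1 : ∀ a b, r a b → G.Adj a b := fun a b h => h.1
    have hr2 : ∀ a b, G.Adj a b → Xor' (r a b) (r b a) := by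
      intro a b hab
      rcases lt_or_gt_of_ne (hgen a b hab) with h | h
      · exact Or.inr ⟨⟨hab.symm, h⟩, fun hc => absurd hc.2 (not_lt.mpr h.le)⟩
      · exact Or.inl ⟨⟨hab, h⟩, fun hc => absurd hc.2 (not_lt.mpr h.le)⟩
    have hr3 : ∀ w, ¬ Relation.TransGen r w w :=
      GZAux.acyclic_of_potential (fun a b h => h.2)
    refine ⟨⟨r, hr1, hr2, hr3⟩, ?_⟩
    apply Subtype.ext
    show ({GZAux.opoint r} : Set (V → ℝ)) = F
    rw [hlset]
    exact (GZAux.exposed_set_eq hgen hcompat).symm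
end

section
/- Let Γ be a finite simple graph on vertex set V with |V| = n, and let P be a polynomial in one variable t with integer coefficients such that for every natural number d, P evaluated at d equals the number of proper colorings f : V → Fin d of Γ (functions with f(u) ≠ f(v) for every edge {u,v}). Then the number of acyclic orientations of Γ satisfies a(Γ) = (−1)^n · P(−1). -/
open Polynomial

namespace StanleyAux

variable {V : Type} [Fintype V] [DecidableEq V]

/-- contraction of edge x y : merge y into x, y becomes isolated -/
def ctr (G : SimpleGraph V) (x y : V) : SimpleGraph V where
  Adj a b := a ≠ b ∧ a ≠ y ∧ b ≠ y ∧
    (G.Adj a b ∨ (a = x ∧ G.Adj y b) ∨ (b = x ∧ G.Adj a y))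
  symm := by
    constructor
    rintro a b ⟨h1, h2, h3, h4⟩
    refine ⟨h1.symm, h3, h2, ?_⟩
    rcases h4 with h | ⟨rfl, h⟩ | ⟨rfl, h⟩
    · exact Or.inl h.symm
    · exact Or.inr (Or.inr ⟨rfl, h.symm⟩)
    · exact Or.inr (Or.inl ⟨rfl, h.symm⟩)
  loopless := ⟨fun a h => h.1 rfl⟩

lemma card_subtype_add {α : Type} [Finite α] (p q : α → Prop) :
    Nat.card {a // p a} = Nat.card {a // p a ∧ q a} + Nat.card {a // p a ∧ ¬ q a} := by
  classical
  rw [← Nat.card_sum]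
  apply Nat.card_congr
  exact ((Equiv.sumCompl (fun x : Subtype p => q x.1)).symm.trans
    ((Equiv.subtypeSubtypeEquivSubtypeInter p q).sumCongr
      (Equiv.subtypeSubtypeEquivSubtypeInter p (fun a => ¬ q a))))

lemma poly_ext {p q : ℤ[X]} (h : ∀ d : ℕ, 0 < d → p.eval (d : ℤ) = q.eval (d : ℤ)) : p = q := by
  apply Polynomial.eq_of_infinite_eval_eq
  refine Set.infinite_of_injective_forall_mem
    (f := fun d : ℕ => ((d : ℤ) + 1)) (fun a b hab => by simpa using hab) ?_
  intro d
  have := h (d + 1) (Nat.succ_pos d)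
  simpa using this

end StanleyAux
namespace StanleyAux2
open StanleyAux

variable {V : Type} [Fintype V] [DecidableEq V]

noncomputable def pcount (G : SimpleGraph V) (d : ℕ) : ℕ :=
  Nat.card { f : V → Fin d // ∀ u v, G.Adj u v → f u ≠ f v }

noncomputable def mcount (G : SimpleGraph V) (x y : V) (d : ℕ) : ℕ :=
  Nat.card { f : V → Fin d //
    (∀ u v, (G.deleteEdges {s(x,y)}).Adj u v → f u ≠ f v) ∧ f x = f y }

variable {G : SimpleGraph V} {x y : V}

lemma del_adj {u v : V} :
    (G.deleteEdges {s(x,y)}).Adj u v ↔ G.Adj u v ∧ s(u,v) ≠ s(x,y) := by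
  simp [SimpleGraph.deleteEdges_adj]

lemma del_adj_self : ¬ (G.deleteEdges {s(x,y)}).Adj x y := by
  simp [del_adj]

lemma del_adj_self' : ¬ (G.deleteEdges {s(x,y)}).Adj y x := by
  rw [del_adj]
  rintro ⟨-, h⟩
  exact h (Sym2.eq_swap)

lemma sym2_ne {a b c d : V} (h1 : a = c → b = d → False) (h2 : a = d → b = c → False) :
    s(a,b) ≠ s(c,d) := by
  intro h
  rcases Sym2.eq_iff.1 h with ⟨e1, e2⟩ | ⟨e1, e2⟩
  · exact h1 e1 e2
  · exact h2 e1 e2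

lemma adj_ctr_of_del (hxy : G.Adj x y) {u v : V}
    (h : (G.deleteEdges {s(x,y)}).Adj u v) :
    (ctr G x y).Adj (if u = y then x else u) (if v = y then x else v) := by
  have hne : x ≠ y := G.ne_of_adj hxy
  obtain ⟨hG, hs⟩ := del_adj.1 h
  by_cases hu : u = y <;> by_cases hv : v = y
  · exfalso; rw [hu, hv] at hG; exact G.loopless.irrefl y hG
  · subst hu
    have hvx : v ≠ x := by
      rintro rfl
      exact hs (Sym2.eq_swap)
    simp only [if_pos rfl, if_neg hv]
    exact ⟨fun hh => hvx hh.symm, hne, hv, Or.inr (Or.inl ⟨rfl, hG⟩)⟩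
  · subst hv
    have hux : u ≠ x := by
      rintro rfl
      exact hs rfl
    simp only [if_pos rfl, if_neg hu]
    exact ⟨hux, hu, hne, Or.inr (Or.inr ⟨rfl, hG⟩)⟩
  · simp only [if_neg hu, if_neg hv]
    exact ⟨hG.ne, hu, hv, Or.inl hG⟩

lemma pcount_del_eq (hxy : G.Adj x y) (d : ℕ) :
    pcount (G.deleteEdges {s(x,y)}) d = pcount G d + mcount G x y d := by
  classical
  have h1 := card_subtype_add
    (p := fun f : V → Fin d => ∀ u v, (G.deleteEdges {s(x,y)}).Adj u v → f u ≠ f v)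
    (q := fun f : V → Fin d => f x = f y)
  have h2 : pcount G d = Nat.card {f : V → Fin d //
      (∀ u v, (G.deleteEdges {s(x,y)}).Adj u v → f u ≠ f v) ∧ ¬ (f x = f y)} := by
    rw [pcount]
    apply Nat.card_congr
    apply Equiv.subtypeEquivRight
    intro f
    constructor
    · intro hf
      exact ⟨fun u v h => hf u v (del_adj.1 h).1, hf x y hxy⟩
    · rintro ⟨hf, hne2⟩ u v huv
      by_cases hs : s(u,v) = s(x,y)
      · rcases Sym2.eq_iff.1 hs with ⟨rfl, rfl⟩ | ⟨rfl, rfl⟩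
        · exact hne2
        · exact fun hh => hne2 hh.symm
      · exact hf u v (del_adj.2 ⟨huv, hs⟩)
  have h3 : mcount G x y d = Nat.card {f : V → Fin d //
      (∀ u v, (G.deleteEdges {s(x,y)}).Adj u v → f u ≠ f v) ∧ f x = f y} := rfl
  rw [pcount, h1, h2, h3]
  exact add_comm _ _

lemma pcount_ctr (hxy : G.Adj x y) (d : ℕ) :
    pcount (ctr G x y) d = mcount G x y d * d := by
  classical
  have hne : x ≠ y := G.ne_of_adj hxy
  have key : pcount (ctr G x y) d
      = Nat.card ({ f : V → Fin d //
          (∀ u v, (G.deleteEdges {s(x,y)}).Adj u v → f u ≠ f v) ∧ f x = f y } × Fin d) := by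
    apply Nat.card_congr
    refine Equiv.mk
      (fun f => ⟨⟨fun a => if a = y then f.1 x else f.1 a, ?_, ?_⟩, f.1 y⟩)
      (fun g => ⟨fun a => if a = y then g.2 else g.1.1 a, ?_⟩) ?_ ?_
    · intro u v h
      have h2 := f.2 _ _ (adj_ctr_of_del hxy h)
      simpa [apply_ite f.1] using h2
    · simp [if_neg hne]
    · rintro u v ⟨hab, hu, hv, hd⟩
      simp only [if_neg hu, if_neg hv]
      obtain ⟨⟨g, hg, hgxy⟩, c⟩ := g
      simp only
      rcases hd with h | ⟨hx', h⟩ | ⟨hx', h⟩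
      · exact hg u v (del_adj.2 ⟨h, sym2_ne (fun e1 e2 => hv e2) (fun e1 _ => hu e1)⟩)
      · subst hx'
        rw [hgxy]
        exact hg y v (del_adj.2 ⟨h, sym2_ne (fun e1 e2 => hv e2) (fun e1 e2 => hab e2.symm)⟩)
      · subst hx'
        conv_rhs => rw [hgxy]
        exact hg u y (del_adj.2 ⟨h, sym2_ne (fun e1 e2 => hab e1) (fun e1 e2 => hu e1)⟩)
    · rintro ⟨f, hf⟩
      apply Subtype.ext
      funext a
      by_cases ha : a = y <;> simp [ha]
    · rintro ⟨⟨g, hg, hgxy⟩, c⟩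
      refine Prod.ext (Subtype.ext ?_) ?_
      · funext a
        by_cases ha : a = y
        · subst ha
          simp [if_neg hne, hgxy.symm]
        · simp [ha]
      · simp
  rw [key, Nat.card_prod]
  simp [mcount, Nat.card_eq_fintype_card]
lemma dvd_mcount (d : ℕ) (x : V) (y : V) : d ∣ mcount G x y d := by
  classical
  rcases Nat.eq_zero_or_pos d with rfl | hd
  · haveI : IsEmpty { f : V → Fin 0 //
        (∀ u v, (G.deleteEdges {s(x,y)}).Adj u v → f u ≠ f v) ∧ f x = f y } :=
      ⟨fun f => (f.1 x).elim0⟩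
    rw [mcount, Nat.card_of_isEmpty]
  · haveI : NeZero d := ⟨hd.ne'⟩
    set P : (V → Fin d) → Prop := fun f =>
      (∀ u v, (G.deleteEdges {s(x,y)}).Adj u v → f u ≠ f v) ∧ f x = f y with hP
    have hsub : ∀ f : V → Fin d, P f → P (fun a => f a - f x) := by
      rintro f ⟨hf1, hf2⟩
      refine ⟨fun u v h hc => hf1 u v h (sub_left_inj.1 hc), ?_⟩
      simp only
      rw [hf2]
    have hadd : ∀ (g : V → Fin d) (c : Fin d), P g → P (fun a => g a + c) := by
      rintro g c ⟨hg1, hg2⟩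
      refine ⟨fun u v h hc => hg1 u v h ((add_left_inj c).1 hc), ?_⟩
      simp only
      rw [hg2]
    have key : mcount G x y d = Nat.card ({ f : V → Fin d // P f ∧ f x = 0 } × Fin d) := by
      apply Nat.card_congr
      refine Equiv.mk
        (fun f => ⟨⟨fun a => f.1 a - f.1 x, hsub f.1 f.2, sub_self _⟩, f.1 x⟩)
        (fun g => ⟨fun a => g.1.1 a + g.2, hadd g.1.1 g.2 g.1.2.1⟩) ?_ ?_
      · rintro ⟨f, hf⟩
        apply Subtype.ext
        funext a
        simp
      · rintro ⟨⟨g, hg, hg0⟩, c⟩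
        refine Prod.ext (Subtype.ext ?_) ?_
        · funext a
          simp [hg0]
        · simp [hg0]
    rw [key, Nat.card_prod, Nat.card_eq_fintype_card (α := Fin d), Fintype.card_fin]
    exact dvd_mul_left d _

end StanleyAux2

namespace StanleyAux3
open StanleyAux StanleyAux2 Relation

variable {V : Type} [Fintype V] [DecidableEq V]

def IsAO (G : SimpleGraph V) (r : V → V → Prop) : Prop :=
  (∀ u v, r u v → G.Adj u v) ∧ (∀ u v, G.Adj u v → Xor' (r u v) (r v u)) ∧
    (∀ v, ¬ Relation.TransGen r v v)

def ext1 (σ : V → V → Prop) (a b : V) : V → V → Prop :=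
  fun u v => σ u v ∨ (u = a ∧ v = b)

def res (r : V → V → Prop) (x y : V) : V → V → Prop :=
  fun u v => r u v ∧ s(u,v) ≠ s(x,y)

variable {G : SimpleGraph V} {x y : V} {σ r : V → V → Prop}


lemma tg_ext1 {a b c e : V} (h : TransGen (ext1 σ a b) c e) :
    TransGen σ c e ∨ (ReflTransGen σ c a ∧ ReflTransGen σ b e) := by
  induction h with
  | single h =>
    rcases h with h | ⟨rfl, rfl⟩
    · exact Or.inl (TransGen.single h)
    · exact Or.inr ⟨ReflTransGen.refl, ReflTransGen.refl⟩
  | tail h1 h2 ih =>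
    rcases h2 with h2 | ⟨rfl, rfl⟩
    · rcases ih with ih | ⟨ih1, ih2⟩
      · exact Or.inl (ih.tail h2)
      · exact Or.inr ⟨ih1, ih2.tail h2⟩
    · rcases ih with ih | ⟨ih1, ih2⟩
      · exact Or.inr ⟨ih.to_reflTransGen, ReflTransGen.refl⟩
      · exact Or.inr ⟨ih1, ReflTransGen.refl⟩

lemma acyclic_ext1 (hσ : ∀ v, ¬ TransGen σ v v) {a b : V} (hab : a ≠ b)
    (hba : ¬ TransGen σ b a) : ∀ v, ¬ TransGen (ext1 σ a b) v v := by
  intro v hv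
  rcases tg_ext1 hv with h | ⟨h1, h2⟩
  · exact hσ v h
  · rcases reflTransGen_iff_eq_or_transGen.1 (h2.trans h1) with h3 | h3
    · exact hab h3
    · exact hba h3

lemma isAO_res (hr : IsAO G r) : IsAO (G.deleteEdges {s(x,y)}) (res r x y) := by
  obtain ⟨h1, h2, h3⟩ := hr
  refine ⟨fun u v h => del_adj.2 ⟨h1 u v h.1, h.2⟩, ?_, ?_⟩
  · intro u v h
    obtain ⟨hadj, hs⟩ := del_adj.1 h
    have hvu : s(v,u) ≠ s(x,y) := fun hh => hs (Sym2.eq_swap.trans hh)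
    rcases h2 u v hadj with ⟨ha, hb⟩ | ⟨ha, hb⟩
    · exact Or.inl ⟨⟨ha, hs⟩, fun hh => hb hh.1⟩
    · exact Or.inr ⟨⟨ha, hvu⟩, fun hh => hb hh.1⟩
  · intro v hv
    exact h3 v (TransGen.mono (fun _ _ h => h.1) _ _ hv)

lemma res_ext1_eq {a b : V}
    (hσadj : ∀ u v, σ u v → (G.deleteEdges {s(x,y)}).Adj u v)
    (hab : s(a,b) = s(x,y)) : res (ext1 σ a b) x y = σ := by
  funext u v
  apply propext
  constructor
  · rintro ⟨h | ⟨rfl, rfl⟩, hs⟩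
    · exact h
    · exact absurd hab hs
  · intro h
    exact ⟨Or.inl h, (del_adj.1 (hσadj u v h)).2⟩

lemma res_no_edge (hσ : ∀ u v, σ u v → (G.deleteEdges {s(x,y)}).Adj u v)
    {a b : V} (hab : s(a,b) = s(x,y)) : ¬ σ a b :=
  fun h => (del_adj.1 (hσ a b h)).2 hab

lemma ext1_isAO (hσ : IsAO (G.deleteEdges {s(x,y)}) σ) {a b : V}
    (hG : G.Adj a b) (hab : s(a,b) = s(x,y)) (hba : ¬ TransGen σ b a) :
    IsAO G (ext1 σ a b) := by
  obtain ⟨h1, h2, h3⟩ := hσ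
  refine ⟨?_, ?_, acyclic_ext1 h3 hG.ne hba⟩
  · rintro u v (h | ⟨rfl, rfl⟩)
    · exact (del_adj.1 (h1 u v h)).1
    · exact hG
  · intro u v hadj
    by_cases hs : s(u,v) = s(x,y)
    · rcases Sym2.eq_iff.1 (hs.trans hab.symm) with ⟨rfl, rfl⟩ | ⟨rfl, rfl⟩
      · refine Or.inl ⟨Or.inr ⟨rfl, rfl⟩, ?_⟩
        rintro (h | ⟨rfl, -⟩)
        · exact res_no_edge h1 (Sym2.eq_swap.trans hab) h
        · exact hG.ne rfl
      · refine Or.inr ⟨Or.inr ⟨rfl, rfl⟩, ?_⟩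
        rintro (h | ⟨rfl, -⟩)
        · exact res_no_edge h1 (Sym2.eq_swap.trans hab) h
        · exact hG.ne rfl
    · have hvu : s(v,u) ≠ s(x,y) := fun hh => hs (Sym2.eq_swap.trans hh)
      have habuv : ¬ (u = a ∧ v = b) := by
        rintro ⟨rfl, rfl⟩
        exact hs hab
      have habvu : ¬ (v = a ∧ u = b) := by
        rintro ⟨rfl, rfl⟩
        exact hvu hab
      rcases h2 u v (del_adj.2 ⟨hadj, hs⟩) with ⟨ha, hb⟩ | ⟨ha, hb⟩
      · refine Or.inl ⟨Or.inl ha, ?_⟩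
        rintro (h | h)
        · exact hb h
        · exact habvu h
      · refine Or.inr ⟨Or.inl ha, ?_⟩
        rintro (h | h)
        · exact hb h
        · exact habuv h

lemma eq_ext1_of (hr : IsAO G r) {a b : V} (hG : G.Adj a b)
    (hab : s(a,b) = s(x,y)) (hrab : r a b) : r = ext1 (res r x y) a b := by
  obtain ⟨h1, h2, h3⟩ := hr
  funext u v
  apply propext
  constructor
  · intro h
    by_cases hs : s(u,v) = s(x,y)
    · rcases Sym2.eq_iff.1 (hs.trans hab.symm) with ⟨rfl, rfl⟩ | ⟨e1, e2⟩
      · exact Or.inr ⟨rfl, rfl⟩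
      · exfalso
        rw [e1, e2] at h
        rcases h2 a b hG with ⟨-, hb'⟩ | ⟨-, hb'⟩
        · exact hb' h
        · exact hb' hrab
    · exact Or.inl ⟨h, hs⟩
  · rintro (⟨h, -⟩ | ⟨rfl, rfl⟩)
    · exact h
    · exact hrab

open Classical in
noncomputable def aoToFun (G : SimpleGraph V) (x y : V) :
    {r : V → V → Prop // IsAO G r} →
    {σ : V → V → Prop // IsAO (G.deleteEdges {s(x,y)}) σ} ⊕
      {σ : V → V → Prop // IsAO (G.deleteEdges {s(x,y)}) σ ∧
        ¬ TransGen σ x y ∧ ¬ TransGen σ y x} := fun r =>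
  if h : (¬ TransGen (res r.1 x y) x y ∧ ¬ TransGen (res r.1 x y) y x) ∧ r.1 x y
  then Sum.inr ⟨res r.1 x y, isAO_res r.2, h.1.1, h.1.2⟩
  else Sum.inl ⟨res r.1 x y, isAO_res r.2⟩

open Classical in
noncomputable def aoInvFun (G : SimpleGraph V) (x y : V) (hxy : G.Adj x y) :
    ({σ : V → V → Prop // IsAO (G.deleteEdges {s(x,y)}) σ} ⊕
      {σ : V → V → Prop // IsAO (G.deleteEdges {s(x,y)}) σ ∧
        ¬ TransGen σ x y ∧ ¬ TransGen σ y x}) →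
    {r : V → V → Prop // IsAO G r} := fun z =>
  match z with
  | Sum.inl ⟨σ, hσ⟩ =>
    if h : TransGen σ x y
    then ⟨ext1 σ x y, ext1_isAO hσ hxy rfl (fun h' => hσ.2.2 x (h.trans h'))⟩
    else ⟨ext1 σ y x, ext1_isAO hσ hxy.symm Sym2.eq_swap h⟩
  | Sum.inr ⟨σ, hσ, _, h2⟩ => ⟨ext1 σ x y, ext1_isAO hσ hxy rfl h2⟩

lemma aoToFun_eq_inr {r : {r : V → V → Prop // IsAO G r}}
    (h : (¬ TransGen (res r.1 x y) x y ∧ ¬ TransGen (res r.1 x y) y x) ∧ r.1 x y) :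
    aoToFun G x y r = Sum.inr ⟨res r.1 x y, isAO_res r.2, h.1.1, h.1.2⟩ := dif_pos h

lemma aoToFun_eq_inl {r : {r : V → V → Prop // IsAO G r}}
    (h : ¬ ((¬ TransGen (res r.1 x y) x y ∧ ¬ TransGen (res r.1 x y) y x) ∧ r.1 x y)) :
    aoToFun G x y r = Sum.inl ⟨res r.1 x y, isAO_res r.2⟩ := dif_neg h

lemma aoInvFun_inl_pos (hxy : G.Adj x y) {σ : V → V → Prop}
    {hσ : IsAO (G.deleteEdges {s(x,y)}) σ} (h : TransGen σ x y) :
    aoInvFun G x y hxy (Sum.inl ⟨σ, hσ⟩)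
      = ⟨ext1 σ x y, ext1_isAO hσ hxy rfl (fun h' => hσ.2.2 x (h.trans h'))⟩ := dif_pos h

lemma aoInvFun_inl_neg (hxy : G.Adj x y) {σ : V → V → Prop}
    {hσ : IsAO (G.deleteEdges {s(x,y)}) σ} (h : ¬ TransGen σ x y) :
    aoInvFun G x y hxy (Sum.inl ⟨σ, hσ⟩)
      = ⟨ext1 σ y x, ext1_isAO hσ hxy.symm Sym2.eq_swap h⟩ := dif_neg h

lemma aoInvFun_inr (hxy : G.Adj x y) {σ : V → V → Prop}
    {hσ : IsAO (G.deleteEdges {s(x,y)}) σ} {h1 : ¬ TransGen σ x y} {h2 : ¬ TransGen σ y x} :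
    aoInvFun G x y hxy (Sum.inr ⟨σ, hσ, h1, h2⟩)
      = ⟨ext1 σ x y, ext1_isAO hσ hxy rfl h2⟩ := rfl

lemma ao_left_inv (hxy : G.Adj x y) (r : {r : V → V → Prop // IsAO G r}) :
    aoInvFun G x y hxy (aoToFun G x y r) = r := by
  classical
  obtain ⟨rr, hr⟩ := r
  rcases hr.2.1 x y hxy with ⟨hxy', hnyx⟩ | ⟨hyx', hnxy⟩
  · have hTyx : ¬ TransGen (res rr x y) y x := fun h =>
      hr.2.2 x (TransGen.head hxy' (TransGen.mono (fun _ _ hh => hh.1) _ _ h))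
    by_cases hT : TransGen (res rr x y) x y
    · have hcond : ¬ ((¬ TransGen (res rr x y) x y ∧ ¬ TransGen (res rr x y) y x) ∧ rr x y) :=
        fun hh => hh.1.1 hT
      rw [aoToFun_eq_inl hcond, aoInvFun_inl_pos hxy hT]
      exact Subtype.ext (eq_ext1_of hr hxy rfl hxy').symm
    · have hcond : ((¬ TransGen (res rr x y) x y ∧ ¬ TransGen (res rr x y) y x) ∧ rr x y) :=
        ⟨⟨hT, hTyx⟩, hxy'⟩
      rw [aoToFun_eq_inr hcond, aoInvFun_inr hxy]
      · exact Subtype.ext (eq_ext1_of hr hxy rfl hxy').symm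
      all_goals first | exact isAO_res hr | exact hT | exact hTyx
  · have hTxy : ¬ TransGen (res rr x y) x y := fun h =>
      hr.2.2 y (TransGen.head hyx' (TransGen.mono (fun _ _ hh => hh.1) _ _ h))
    have hcond : ¬ ((¬ TransGen (res rr x y) x y ∧ ¬ TransGen (res rr x y) y x) ∧ rr x y) :=
      fun hh => hnxy hh.2
    rw [aoToFun_eq_inl hcond, aoInvFun_inl_neg hxy hTxy]
    exact Subtype.ext (eq_ext1_of hr hxy.symm Sym2.eq_swap hyx').symm

lemma ao_right_inv (hxy : G.Adj x y)
    (z : {σ : V → V → Prop // IsAO (G.deleteEdges {s(x,y)}) σ} ⊕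
      {σ : V → V → Prop // IsAO (G.deleteEdges {s(x,y)}) σ ∧
        ¬ TransGen σ x y ∧ ¬ TransGen σ y x}) :
    aoToFun G x y (aoInvFun G x y hxy z) = z := by
  classical
  have hne : x ≠ y := G.ne_of_adj hxy
  rcases z with ⟨σ, hσ⟩ | ⟨σ, hσ, h1, h2⟩
  · by_cases hT : TransGen σ x y
    · rw [aoInvFun_inl_pos hxy hT]
      have hres : res (ext1 σ x y) x y = σ := res_ext1_eq hσ.1 rfl
      have hcond : ¬ ((¬ TransGen (res (ext1 σ x y) x y) x y ∧
          ¬ TransGen (res (ext1 σ x y) x y) y x) ∧ (ext1 σ x y) x y) := by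
        rw [hres]
        exact fun hh => hh.1.1 hT
      rw [aoToFun_eq_inl hcond]
      exact congrArg Sum.inl (Subtype.ext hres)
    · rw [aoInvFun_inl_neg hxy hT]
      have hres : res (ext1 σ y x) x y = σ := res_ext1_eq hσ.1 Sym2.eq_swap
      have hcond : ¬ ((¬ TransGen (res (ext1 σ y x) x y) x y ∧
          ¬ TransGen (res (ext1 σ y x) x y) y x) ∧ (ext1 σ y x) x y) := by
        rintro ⟨-, (h | ⟨rfl, -⟩)⟩
        · exact res_no_edge hσ.1 rfl h
        · exact hne rfl
      rw [aoToFun_eq_inl hcond]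
      exact congrArg Sum.inl (Subtype.ext hres)
  · rw [aoInvFun_inr hxy]
    have hres : res (ext1 σ x y) x y = σ := res_ext1_eq hσ.1 rfl
    have hcond : ((¬ TransGen (res (ext1 σ x y) x y) x y ∧
        ¬ TransGen (res (ext1 σ x y) x y) y x) ∧ (ext1 σ x y) x y) := by
      rw [hres]
      exact ⟨⟨h1, h2⟩, Or.inr ⟨rfl, rfl⟩⟩
    rw [aoToFun_eq_inr hcond]
    · exact congrArg Sum.inr (Subtype.ext hres)
    all_goals assumption

lemma ao_split (hxy : G.Adj x y) :
    Nat.card {r : V → V → Prop // IsAO G r} =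
      Nat.card {σ : V → V → Prop // IsAO (G.deleteEdges {s(x,y)}) σ} +
      Nat.card {σ : V → V → Prop // IsAO (G.deleteEdges {s(x,y)}) σ ∧
        ¬ TransGen σ x y ∧ ¬ TransGen σ y x} := by
  classical
  rw [← Nat.card_sum]
  exact Nat.card_congr (Equiv.mk (aoToFun G x y) (aoInvFun G x y hxy)
    (ao_left_inv hxy) (ao_right_inv hxy))

def rho (x y : V) : V → V := fun v => if v = y then x else v

def push (σ : V → V → Prop) (x y : V) : V → V → Prop := fun a b =>
  a ≠ y ∧ b ≠ y ∧ (σ a b ∨ (a = x ∧ σ y b) ∨ (b = x ∧ σ a y))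

def pull (G : SimpleGraph V) (τ : V → V → Prop) (x y : V) : V → V → Prop := fun u v =>
  (G.deleteEdges {s(x,y)}).Adj u v ∧ τ (rho x y u) (rho x y v)

def dly (σ : V → V → Prop) (x y : V) : V → V → Prop := fun a b =>
  ∃ a' b', rho x y a' = rho x y a ∧ rho x y b' = rho x y b ∧ σ a' b'

lemma rho_eq_x (hne : x ≠ y) : rho x y x = x := if_neg hne
lemma rho_eq_y : rho x y y = x := if_pos rfl
lemma rho_ne (hw : w ≠ y) : rho x y w = w := if_neg hw

lemma rho_collapse {u u' : V} (h : rho x y u' = rho x y u) (hne : u' ≠ u) :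
    (u' = x ∨ u' = y) ∧ (u = x ∨ u = y) := by
  unfold rho at h
  by_cases h1 : u' = y <;> by_cases h2 : u = y
  · exact absurd (h1.trans h2.symm) hne
  · rw [if_pos h1, if_neg h2] at h
    exact ⟨Or.inr h1, Or.inl h.symm⟩
  · rw [if_neg h1, if_pos h2] at h
    exact ⟨Or.inl h, Or.inr h2⟩
  · rw [if_neg h1, if_neg h2] at h
    exact absurd h hne

lemma tg_dly {σ : V → V → Prop} {a b : V} (h : TransGen (dly σ x y) a b) :
    (∃ a' b', rho x y a' = rho x y a ∧ rho x y b' = rho x y b ∧ TransGen σ a' b') ∨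
    (∃ a' b' m1 m2, rho x y a' = rho x y a ∧ rho x y b' = rho x y b ∧
      (m1 = x ∨ m1 = y) ∧ (m2 = x ∨ m2 = y) ∧
      ReflTransGen σ a' m1 ∧ TransGen σ m2 b') := by
  induction h with
  | single h =>
    obtain ⟨a', b', ha, hb, hs⟩ := h
    exact Or.inl ⟨a', b', ha, hb, TransGen.single hs⟩
  | tail h1 h2 ih =>
    obtain ⟨b'', c'', hb2, hc, harc⟩ := h2
    rcases ih with ⟨a', b', ha, hb, hp⟩ | ⟨a', b', m1, m2, ha, hb, hm1, hm2, hra, htb⟩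
    · by_cases he : b' = b''
      · exact Or.inl ⟨a', c'', ha, hc, hp.tail (he ▸ harc)⟩
      · have hcol := rho_collapse (x := x) (y := y) (hb.trans hb2.symm).symm
          (fun hh => he hh.symm)
        exact Or.inr ⟨a', c'', b', b'', ha, hc, hcol.2, hcol.1,
          hp.to_reflTransGen, TransGen.single harc⟩
    · by_cases he : b' = b''
      · exact Or.inr ⟨a', c'', m1, m2, ha, hc, hm1, hm2, hra, htb.tail (he ▸ harc)⟩
      · have hcol := rho_collapse (x := x) (y := y) (hb.trans hb2.symm).symm
          (fun hh => he hh.symm)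
        exact Or.inr ⟨a', c'', m1, b'', ha, hc, hm1, hcol.1, hra, TransGen.single harc⟩

lemma push_le_dly (hne : x ≠ y) {σ : V → V → Prop} {a b : V} (h : push σ x y a b) :
    dly σ x y a b := by
  obtain ⟨ha, hb, hd⟩ := h
  rcases hd with h | ⟨rfl, h⟩ | ⟨rfl, h⟩
  · exact ⟨a, b, rfl, rfl, h⟩
  · exact ⟨y, b, by rw [rho_eq_y, rho_eq_x hne], rfl, h⟩
  · exact ⟨a, y, rfl, by rw [rho_eq_y, rho_eq_x hne], h⟩

lemma two_step {σ : V → V → Prop} {a b c : V} (h1 : σ a b) (h2 : σ b c) :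
    TransGen σ a c := TransGen.head h1 (TransGen.single h2)

lemma no_cycle_push (hne : x ≠ y) {σ : V → V → Prop}
    (hac : ∀ v, ¬ TransGen σ v v)
    (h1 : ¬ TransGen σ x y) (h2 : ¬ TransGen σ y x) :
    ∀ v, ¬ TransGen (push σ x y) v v := by
  have hM : ∀ p q : V, (p = x ∨ p = y) → (q = x ∨ q = y) → TransGen σ p q → False := by
    rintro p q (rfl | rfl) (rfl | rfl) h
    · exact hac _ h
    · exact h1 h
    · exact h2 h
    · exact hac _ h
  intro v hv
  have hd : TransGen (dly σ x y) v v := TransGen.mono (fun _ _ h => push_le_dly hne h) _ _ hv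
  rcases tg_dly hd with ⟨a', b', ha, hb, hp⟩ | ⟨a', b', m1, m2, ha, hb, hm1, hm2, hra, htb⟩
  · by_cases he : a' = b'
    · exact hac a' (he ▸ hp)
    · have hcol := rho_collapse (x := x) (y := y) (ha.trans hb.symm) he
      exact hM a' b' hcol.1 hcol.2 hp
  · by_cases he : b' = a'
    · subst he
      exact hM m2 m1 hm2 hm1 (htb.trans_left hra)
    · have hcol := rho_collapse (x := x) (y := y) (hb.trans ha.symm) he
      exact hM m2 b' hm2 hcol.1 htb

lemma push_isAO (hxy : G.Adj x y) {σ : V → V → Prop}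
    (hσ : IsAO (G.deleteEdges {s(x,y)}) σ)
    (h1 : ¬ TransGen σ x y) (h2 : ¬ TransGen σ y x) :
    IsAO (ctr G x y) (push σ x y) := by
  have hne : x ≠ y := G.ne_of_adj hxy
  obtain ⟨ho, hx, hac⟩ := hσ
  have hnoyx : ¬ σ y x := fun h => del_adj_self' (ho y x h)
  have hnoxy : ¬ σ x y := fun h => del_adj_self (ho x y h)
  refine ⟨?_, ?_, no_cycle_push hne hac h1 h2⟩
  · rintro a b ⟨ha, hb, hd⟩
    rcases hd with h | ⟨rfl, h⟩ | ⟨rfl, h⟩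
    · exact ⟨(ho a b h).ne, ha, hb, Or.inl (del_adj.1 (ho a b h)).1⟩
    · refine ⟨?_, ha, hb, Or.inr (Or.inl ⟨rfl, (del_adj.1 (ho y b h)).1⟩)⟩
      rintro rfl
      exact hnoyx h
    · refine ⟨?_, ha, hb, Or.inr (Or.inr ⟨rfl, (del_adj.1 (ho a y h)).1⟩)⟩
      rintro rfl
      exact hnoxy h
  · rintro a b ⟨hab, ha, hb, hd⟩
    have hnotboth : ¬ (push σ x y a b ∧ push σ x y b a) := by
      rintro ⟨⟨-, -, p⟩, ⟨-, -, q⟩⟩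
      rcases p with p | ⟨rfl, p⟩ | ⟨rfl, p⟩ <;> rcases q with q | ⟨hq, q⟩ | ⟨hq, q⟩
      · exact hac a (two_step p q)
      · exact h2 (hq ▸ two_step q p)
      · exact h1 (hq ▸ two_step p q)
      · exact h2 (two_step p q)
      · exact hab hq.symm
      · exact hac _ (two_step p q)
      · exact h1 (two_step q p)
      · exact hac _ (two_step q p)
      · exact hab hq
    have hor : push σ x y a b ∨ push σ x y b a := by
      rcases hd with h | ⟨rfl, h⟩ | ⟨rfl, h⟩
      · have hGd : (G.deleteEdges {s(x,y)}).Adj a b :=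
          del_adj.2 ⟨h, sym2_ne (fun _ e2 => hb e2) (fun e1 _ => ha e1)⟩
        rcases hx a b hGd with ⟨p, -⟩ | ⟨p, -⟩
        · exact Or.inl ⟨ha, hb, Or.inl p⟩
        · exact Or.inr ⟨hb, ha, Or.inl p⟩
      · have hGd : (G.deleteEdges {s(a,y)}).Adj y b :=
          del_adj.2 ⟨h, sym2_ne (fun e1 _ => hne e1.symm) (fun _ e2 => hab e2.symm)⟩
        rcases hx y b hGd with ⟨p, -⟩ | ⟨p, -⟩
        · exact Or.inl ⟨ha, hb, Or.inr (Or.inl ⟨rfl, p⟩)⟩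
        · exact Or.inr ⟨hb, ha, Or.inr (Or.inr ⟨rfl, p⟩)⟩
      · have hGd : (G.deleteEdges {s(b,y)}).Adj a y :=
          del_adj.2 ⟨h, sym2_ne (fun e1 _ => hab e1) (fun e1 _ => ha e1)⟩
        rcases hx a y hGd with ⟨p, -⟩ | ⟨p, -⟩
        · exact Or.inl ⟨ha, hb, Or.inr (Or.inr ⟨rfl, p⟩)⟩
        · exact Or.inr ⟨hb, ha, Or.inr (Or.inl ⟨rfl, p⟩)⟩
    rcases hor with h | h
    · exact Or.inl ⟨h, fun hh => hnotboth ⟨h, hh⟩⟩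
    · exact Or.inr ⟨h, fun hh => hnotboth ⟨hh, h⟩⟩

lemma rho_ne_y (hne : x ≠ y) (w : V) : rho x y w ≠ y := by
  unfold rho
  by_cases hw : w = y
  · rw [if_pos hw]; exact hne
  · rw [if_neg hw]; exact hw

lemma pull_isAO (hxy : G.Adj x y) {τ : V → V → Prop} (hτ : IsAO (ctr G x y) τ) :
    IsAO (G.deleteEdges {s(x,y)}) (pull G τ x y) ∧
      ¬ TransGen (pull G τ x y) x y ∧ ¬ TransGen (pull G τ x y) y x := by
  have hne : x ≠ y := G.ne_of_adj hxy
  obtain ⟨ho, hx, hac⟩ := hτ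
  have hTG : ∀ {u v : V}, TransGen (pull G τ x y) u v →
      TransGen τ (rho x y u) (rho x y v) :=
    fun h => TransGen.lift (rho x y) (fun _ _ hh => hh.2) _ _ h
  refine ⟨⟨fun u v h => h.1, ?_, fun v hv => hac _ (hTG hv)⟩, ?_, ?_⟩
  · intro u v h
    have hadj : (ctr G x y).Adj (rho x y u) (rho x y v) := adj_ctr_of_del hxy h
    rcases hx _ _ hadj with ⟨p, np⟩ | ⟨p, np⟩
    · exact Or.inl ⟨⟨h, p⟩, fun hh => np hh.2⟩
    · exact Or.inr ⟨⟨h.symm, p⟩, fun hh => np hh.2⟩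
  · intro h
    have h' := hTG h
    rw [rho_eq_x hne, rho_eq_y] at h'
    exact hac x h'
  · intro h
    have h' := hTG h
    rw [rho_eq_x hne, rho_eq_y] at h'
    exact hac x h'

lemma pull_push (hxy : G.Adj x y) {σ : V → V → Prop}
    (hσ : IsAO (G.deleteEdges {s(x,y)}) σ)
    (h1 : ¬ TransGen σ x y) (h2 : ¬ TransGen σ y x) :
    pull G (push σ x y) x y = σ := by
  have hne : x ≠ y := G.ne_of_adj hxy
  obtain ⟨ho, hx, hac⟩ := hσ
  funext u v
  apply propext
  constructor
  · rintro ⟨hadj, -, -, hd⟩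
    by_cases hu : u = y <;> by_cases hv : v = y
    · exfalso
      rw [hu, hv] at hadj
      exact (G.deleteEdges {s(x,y)}).loopless.irrefl y hadj
    · have hvx : v ≠ x := by
        rintro rfl
        exact del_adj_self' (hu ▸ hadj)
      rw [hu] at hadj ⊢
      rw [hu, rho_eq_y] at hd
      rw [rho_ne hv] at hd
      rcases hd with h | ⟨-, h⟩ | ⟨hvx', -⟩
      · -- σ x v, want σ y v
        rcases hx y v hadj with ⟨p, -⟩ | ⟨p, np⟩
        · exact p
        · exact absurd (two_step h p) h1
      · exact h
      · exact absurd hvx' hvx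
    · have hux : u ≠ x := by
        rintro rfl
        exact del_adj_self (hv ▸ hadj)
      rw [hv] at hadj ⊢
      rw [hv, rho_eq_y] at hd
      rw [rho_ne hu] at hd
      rcases hd with h | ⟨hux', -⟩ | ⟨-, h⟩
      · -- σ u x, want σ u y
        rcases hx u y hadj with ⟨p, -⟩ | ⟨p, np⟩
        · exact p
        · exact absurd (two_step p h) h2
      · exact absurd hux' hux
      · exact h
    · rw [rho_ne hu, rho_ne hv] at hd
      rcases hd with h | ⟨hux, h⟩ | ⟨hvx, h⟩
      · exact h
      · -- u = x, σ y v, want σ x v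
        subst hux
        rcases hx u v hadj with ⟨p, -⟩ | ⟨p, np⟩
        · exact p
        · exact absurd (two_step h p) h2
      · -- v = x, σ u y, want σ u x
        subst hvx
        rcases hx u v hadj with ⟨p, -⟩ | ⟨p, np⟩
        · exact p
        · exact absurd (two_step p h) h1
  · intro h
    have hadj := ho u v h
    refine ⟨hadj, rho_ne_y hne u, rho_ne_y hne v, ?_⟩
    by_cases hu : u = y <;> by_cases hv : v = y
    · exfalso
      rw [hu, hv] at hadj
      exact (G.deleteEdges {s(x,y)}).loopless.irrefl y hadj
    · rw [hu, rho_eq_y, rho_ne hv]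
      exact Or.inr (Or.inl ⟨rfl, hu ▸ h⟩)
    · rw [hv, rho_eq_y, rho_ne hu]
      exact Or.inr (Or.inr ⟨rfl, hv ▸ h⟩)
    · rw [rho_ne hu, rho_ne hv]
      exact Or.inl h

lemma push_pull (hxy : G.Adj x y) {τ : V → V → Prop} (hτ : IsAO (ctr G x y) τ) :
    push (pull G τ x y) x y = τ := by
  have hne : x ≠ y := G.ne_of_adj hxy
  obtain ⟨ho, hx, hac⟩ := hτ
  funext a b
  apply propext
  constructor
  · rintro ⟨ha, hb, hd⟩
    rcases hd with ⟨-, h⟩ | ⟨ha2, -, h⟩ | ⟨hb2, -, h⟩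
    · rwa [rho_ne ha, rho_ne hb] at h
    · rw [rho_eq_y, rho_ne hb] at h
      rwa [ha2]
    · rw [rho_ne ha, rho_eq_y] at h
      rwa [hb2]
  · intro h
    obtain ⟨hab, ha, hb, hd⟩ := ho a b h
    refine ⟨ha, hb, ?_⟩
    rcases hd with hG | ⟨ha2, hG⟩ | ⟨hb2, hG⟩
    · refine Or.inl ⟨del_adj.2 ⟨hG, sym2_ne (fun _ e2 => hb e2) (fun e1 _ => ha e1)⟩, ?_⟩
      rwa [rho_ne ha, rho_ne hb]
    · refine Or.inr (Or.inl ⟨ha2, del_adj.2 ⟨hG, sym2_ne (fun e1 _ => hne e1.symm)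
        (fun _ e2 => hab (ha2.trans e2.symm))⟩, ?_⟩)
      rw [rho_eq_y, rho_ne hb, ← ha2]
      exact h
    · refine Or.inr (Or.inr ⟨hb2, del_adj.2 ⟨hG, sym2_ne (fun e1 _ => hab (e1.trans hb2.symm))
        (fun e1 _ => ha e1)⟩, ?_⟩)
      rw [rho_ne ha, rho_eq_y, ← hb2]
      exact h

lemma ao_ctr (hxy : G.Adj x y) :
    Nat.card {σ : V → V → Prop // IsAO (G.deleteEdges {s(x,y)}) σ ∧
        ¬ TransGen σ x y ∧ ¬ TransGen σ y x} =
      Nat.card {τ : V → V → Prop // IsAO (ctr G x y) τ} := by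
  apply Nat.card_congr
  exact Equiv.mk
    (fun σ => ⟨push σ.1 x y, push_isAO hxy σ.2.1 σ.2.2.1 σ.2.2.2⟩)
    (fun τ => ⟨pull G τ.1 x y, pull_isAO hxy τ.2⟩)
    (fun σ => Subtype.ext (pull_push hxy σ.2.1 σ.2.2.1 σ.2.2.2))
    (fun τ => Subtype.ext (push_pull hxy τ.2))

lemma ctr_no_y {a b : V} (h : (ctr G x y).Adj a b) : a ≠ y ∧ b ≠ y := ⟨h.2.1, h.2.2.1⟩

lemma mu_del_lt (hxy : G.Adj x y) :
    {p : V × V | (G.deleteEdges {s(x,y)}).Adj p.1 p.2}.ncard <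
      {p : V × V | G.Adj p.1 p.2}.ncard := by
  apply Set.ncard_lt_ncard _ (Set.toFinite _)
  constructor
  · intro p hp
    exact (del_adj.1 hp).1
  · intro hsub
    exact del_adj_self (hsub (show G.Adj (x,y).1 (x,y).2 from hxy))

lemma mu_ctr_lt (hxy : G.Adj x y) :
    {p : V × V | (ctr G x y).Adj p.1 p.2}.ncard < {p : V × V | G.Adj p.1 p.2}.ncard := by
  classical
  have hne : x ≠ y := G.ne_of_adj hxy
  have hle : {p : V × V | (ctr G x y).Adj p.1 p.2}.ncard ≤
      ({p : V × V | G.Adj p.1 p.2} \ {(x, y)}).ncard := by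
    apply Set.ncard_le_ncard_of_injOn
      (fun p => if G.Adj p.1 p.2 then p else (Equiv.swap x y p.1, Equiv.swap x y p.2))
    · rintro ⟨a, b⟩ hab
      obtain ⟨hne2, ha, hb, hd⟩ := hab
      dsimp only at hne2 ha hb hd ⊢
      by_cases hG : G.Adj a b
      · rw [if_pos hG]
        refine ⟨hG, fun hmem => ?_⟩
        have e2 : b = y := congrArg Prod.snd (Set.mem_singleton_iff.1 hmem)
        exact hb e2
      · rw [if_neg hG]
        rcases hd with h | ⟨hax, h⟩ | ⟨hbx, h⟩
        · exact absurd h hG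
        · have hbx : b ≠ x := fun hh => hne2 (hax.trans hh.symm)
          refine ⟨?_, fun hmem => ?_⟩
          · show G.Adj (Equiv.swap x y a) (Equiv.swap x y b)
            rw [hax, Equiv.swap_apply_left, Equiv.swap_apply_of_ne_of_ne hbx hb]
            exact h
          · have e1 : Equiv.swap x y a = x := congrArg Prod.fst (Set.mem_singleton_iff.1 hmem)
            rw [hax, Equiv.swap_apply_left] at e1
            exact hne e1.symm
        · have hax2 : a ≠ x := fun hh => hne2 (hh.trans hbx.symm)
          refine ⟨?_, fun hmem => ?_⟩
          · show G.Adj (Equiv.swap x y a) (Equiv.swap x y b)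
            rw [hbx, Equiv.swap_apply_left, Equiv.swap_apply_of_ne_of_ne hax2 ha]
            exact h
          · have e1 : Equiv.swap x y a = x := congrArg Prod.fst (Set.mem_singleton_iff.1 hmem)
            rw [Equiv.swap_apply_of_ne_of_ne hax2 ha] at e1
            exact hax2 e1
    · rintro ⟨a, b⟩ hab ⟨c, d⟩ hcd hf
      have hab' : a ≠ y ∧ b ≠ y := ⟨hab.2.1, hab.2.2.1⟩
      have hcd' : c ≠ y ∧ d ≠ y := ⟨hcd.2.1, hcd.2.2.1⟩
      have hxin : ∀ e f : V, (ctr G x y).Adj e f → ¬ G.Adj e f → e = x ∨ f = x := by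
        rintro e f ⟨-, -, -, hd⟩ hG
        rcases hd with h | ⟨h, -⟩ | ⟨h, -⟩
        · exact absurd h hG
        · exact Or.inl h
        · exact Or.inr h
      dsimp only at hf
      by_cases h1 : G.Adj a b <;> by_cases h2 : G.Adj c d
      · rw [if_pos h1, if_pos h2] at hf
        exact hf
      · rw [if_pos h1, if_neg h2] at hf
        exfalso
        have e1 : a = Equiv.swap x y c := congrArg Prod.fst hf
        have e2 : b = Equiv.swap x y d := congrArg Prod.snd hf
        rcases hxin c d hcd h2 with h | h
        · rw [h, Equiv.swap_apply_left] at e1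
          exact hab'.1 e1
        · rw [h, Equiv.swap_apply_left] at e2
          exact hab'.2 e2
      · rw [if_neg h1, if_pos h2] at hf
        exfalso
        have e1 : Equiv.swap x y a = c := congrArg Prod.fst hf
        have e2 : Equiv.swap x y b = d := congrArg Prod.snd hf
        rcases hxin a b hab h1 with h | h
        · rw [h, Equiv.swap_apply_left] at e1
          exact hcd'.1 e1.symm
        · rw [h, Equiv.swap_apply_left] at e2
          exact hcd'.2 e2.symm
      · rw [if_neg h1, if_neg h2] at hf
        have e1 : Equiv.swap x y a = Equiv.swap x y c := congrArg Prod.fst hf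
        have e2 : Equiv.swap x y b = Equiv.swap x y d := congrArg Prod.snd hf
        exact Prod.ext ((Equiv.swap x y).injective e1) ((Equiv.swap x y).injective e2)
  exact lt_of_le_of_lt hle
    (Set.ncard_diff_singleton_lt_of_mem (show G.Adj (x,y).1 (x,y).2 from hxy) (Set.toFinite _))

lemma pcount_bot (h : ∀ u v, ¬ G.Adj u v) (d : ℕ) :
    pcount G d = d ^ Fintype.card V := by
  rw [pcount]
  rw [Nat.card_congr (Equiv.subtypeUnivEquiv (fun f u v hadj => absurd hadj (h u v)))]
  rw [Nat.card_eq_fintype_card, Fintype.card_fun, Fintype.card_fin]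

lemma ao_bot (h : ∀ u v, ¬ G.Adj u v) :
    Nat.card {r : V → V → Prop // IsAO G r} = 1 := by
  have hbot : IsAO G (fun _ _ => False) := by
    refine ⟨fun u v hf => hf.elim, fun u v ha => absurd ha (h u v), fun v hv => ?_⟩
    cases hv with
    | single h => exact h
    | tail h1 h2 => exact h2
  haveI : Nonempty {r : V → V → Prop // IsAO G r} := ⟨⟨_, hbot⟩⟩
  haveI : Subsingleton {r : V → V → Prop // IsAO G r} := by
    constructor
    rintro ⟨r1, hr1⟩ ⟨r2, hr2⟩
    apply Subtype.ext
    funext u v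
    apply propext
    constructor
    · intro hh
      exact absurd (hr1.1 u v hh) (h u v)
    · intro hh
      exact absurd (hr2.1 u v hh) (h u v)
  exact Nat.card_unique

lemma base_case (G : SimpleGraph V) (h : ∀ u v, ¬ G.Adj u v) :
    ∃ P : Polynomial ℤ, (∀ d : ℕ, P.eval (d : ℤ) = pcount G d) ∧
      (Nat.card {r : V → V → Prop // IsAO G r} : ℤ)
        = (-1) ^ (Fintype.card V) * P.eval (-1) := by
  refine ⟨X ^ (Fintype.card V), ?_, ?_⟩
  · intro d
    rw [pcount_bot h d, eval_pow, eval_X]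
    push_cast
    ring
  · rw [ao_bot h, eval_pow, eval_X, ← pow_add]
    rw [Even.neg_one_pow ⟨Fintype.card V, rfl⟩]
    norm_num

lemma pcount_zero (v : V) (G : SimpleGraph V) : pcount G 0 = 0 := by
  haveI : IsEmpty { f : V → Fin 0 // ∀ u v, G.Adj u v → f u ≠ f v } :=
    ⟨fun f => (f.1 v).elim0⟩
  rw [pcount, Nat.card_of_isEmpty]

lemma key (k : ℕ) : ∀ (G : SimpleGraph V), {p : V × V | G.Adj p.1 p.2}.ncard ≤ k →
    ∃ P : Polynomial ℤ, (∀ d : ℕ, P.eval (d : ℤ) = pcount G d) ∧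
      (Nat.card {r : V → V → Prop // IsAO G r} : ℤ)
        = (-1) ^ (Fintype.card V) * P.eval (-1) := by
  induction k with
  | zero =>
    intro G hG
    have hemp : {p : V × V | G.Adj p.1 p.2} = ∅ :=
      (Set.ncard_eq_zero (Set.toFinite _)).1 (Nat.le_zero.1 hG)
    exact base_case G fun u v hadj =>
      (Set.eq_empty_iff_forall_notMem.1 hemp (u, v)) hadj
  | succ k ih =>
    intro G hG
    by_cases hE : ∃ a b, G.Adj a b
    · obtain ⟨x, y, hxy⟩ := hE
      have hne : x ≠ y := G.ne_of_adj hxy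
      obtain ⟨P1, hP1, hA1⟩ := ih (G.deleteEdges {s(x,y)})
        (Nat.lt_succ_iff.1 (lt_of_lt_of_le (mu_del_lt hxy) hG))
      obtain ⟨Q, hQ, hAQ⟩ := ih (ctr G x y)
        (Nat.lt_succ_iff.1 (lt_of_lt_of_le (mu_ctr_lt hxy) hG))
      set M := Q.divX with hM
      have hQ0 : Q.eval 0 = 0 := by
        have := hQ 0
        rw [pcount_ctr hxy 0] at this
        simpa using this
      have hQM : Q = X * M := by
        have h0 := Polynomial.X_mul_divX_add Q
        rw [Polynomial.coeff_zero_eq_eval_zero, hQ0, map_zero, add_zero] at h0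
        exact h0.symm
      have hMd : ∀ d : ℕ, 0 < d → M.eval (d : ℤ) = mcount G x y d := by
        intro d hd
        have h1 := hQ d
        rw [hQM, pcount_ctr hxy d, eval_mul, eval_X] at h1
        push_cast at h1
        have hd' : (d : ℤ) ≠ 0 := Int.natCast_ne_zero.2 hd.ne'
        apply mul_right_cancel₀ hd'
        linarith [h1]
      have hM0 : M.eval 0 = 0 := by
        have hdvd : ∀ d : ℕ, 0 < d → (d : ℤ) ∣ M.eval 0 := by
          intro d hd
          have h1 : (d : ℤ) ∣ M.eval (d : ℤ) := by
            rw [hMd d hd]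
            exact Int.natCast_dvd_natCast.2 (dvd_mcount d x y)
          have h2 : (d : ℤ) ∣ M.eval (d : ℤ) - M.eval 0 := by
            have h3 := Polynomial.sub_dvd_eval_sub (d : ℤ) 0 M
            simpa using h3
          have h4 := dvd_sub h1 h2
          rwa [sub_sub_cancel] at h4
        by_contra h0
        have h1 := hdvd ((M.eval 0).natAbs + 1) (Nat.succ_pos _)
        have h2 : ((M.eval 0).natAbs + 1 : ℕ) ∣ (M.eval 0).natAbs := by
          have h2' := Int.dvd_natAbs.2 h1
          exact_mod_cast h2'
        have h3 := Nat.le_of_dvd (Nat.pos_of_ne_zero fun hz => h0 (Int.natAbs_eq_zero.1 hz)) h2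
        omega
      refine ⟨P1 - M, ?_, ?_⟩
      · intro d
        rcases Nat.eq_zero_or_pos d with rfl | hd
        · have hp1 := hP1 0
          rw [pcount_zero x (G.deleteEdges {s(x,y)})] at hp1
          rw [pcount_zero x G, eval_sub]
          push_cast at hp1 ⊢
          rw [hp1, hM0]
          ring
        · rw [eval_sub, hP1 d, hMd d hd]
          have hsum := pcount_del_eq hxy d
          rw [hsum]
          push_cast
          ring
      · have hsplit := ao_split hxy
        have hctr' := ao_ctr hxy
        have hQe : Q.eval (-1) = - M.eval (-1) := by
          rw [hQM, eval_mul, eval_X]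
          ring
        rw [hsplit, hctr']
        push_cast
        rw [hA1, hAQ]
        rw [eval_sub]
        rw [hQe]
        ring
    · push_neg at hE
      exact base_case G hE

end StanleyAux3

/-- Stanley's theorem: `a(Γ) = (-1)^{|V|} χ(Γ, -1)`. -/
theorem acyclicOrientationCount_eq_chromaticPolynomial_neg_one
    {V : Type} [Fintype V] [DecidableEq V] (n : ℕ)
    (G : SimpleGraph V) (hV : Fintype.card V = n)
    (P : Polynomial ℤ)
    (hP : ∀ d : ℕ, P.eval ((d : ℕ) : ℤ)
        = Nat.card { f : V → Fin d // ∀ u v, G.Adj u v → f u ≠ f v }) :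
    (acyclicOrientationCount G : ℤ) = (-1 : ℤ) ^ n * P.eval (-1 : ℤ) := by
  classical
  subst hV
  obtain ⟨P₀, hP₀, hA⟩ := StanleyAux3.key (V := V) ({p : V × V | G.Adj p.1 p.2}.ncard) G le_rfl
  have hPP : P = P₀ := StanleyAux.poly_ext (fun d _ => by rw [hP d, hP₀ d]; rfl)
  have hao : acyclicOrientationCount G
      = Nat.card {r : V → V → Prop // StanleyAux3.IsAO G r} := rfl
  rw [hao, hPP]
  exact hA
end
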